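/- arXiv:1505.05188 — 2 statements merged into one kernel-verified Lean document; each statement's English description precedes it below -/
import Mathlib

section
/- Let U, V, W be nonempty compact subsets of ℂ and suppose that every operator in M₊(U,V,W) is invertible (equivalently, one operator in PE₊(U,V,W) is invertible). Then every finite tridiagonal matrix over U, V, W, i.e. every F ∈ M_fin(U,V,W), is invertible. -/
open scoped ENNReal

noncomputable section

/-- The sequence space `ℓᵖ(ℤ)` (complex valued). -/
abbrev SeqZ (p : ℝ≥0∞) : Type := lp (fun _ : ℤ => ℂ) p
/-- The sequence space `ℓᵖ(ℕ)` (complex valued). -/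
abbrev SeqN (p : ℝ≥0∞) : Type := lp (fun _ : ℕ => ℂ) p

/-- The three diagonals take values in `U`, `V`, `W` respectively. -/
def RangesIn (U V W : Set ℂ) {ι : Type*} (u v w : ι → ℂ) : Prop :=
  (∀ i, u i ∈ U) ∧ (∀ i, v i ∈ V) ∧ (∀ i, w i ∈ W)

/-- `A` acts on `ℓᵖ(ℤ)` as the bi-infinite tridiagonal matrix with subdiagonal `u`
(entries `a_{i,i-1} = u i`), main diagonal `v` and superdiagonal `w` (`a_{i,i+1} = w i`). -/
def BiActs {p : ℝ≥0∞} [Fact (1 ≤ p)] (A : SeqZ p →L[ℂ] SeqZ p) (u v w : ℤ → ℂ) : Prop :=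
  ∀ (x : SeqZ p) (i : ℤ),
    (A x : ∀ _ : ℤ, ℂ) i =
      u i * (x : ∀ _ : ℤ, ℂ) (i - 1) + v i * (x : ∀ _ : ℤ, ℂ) i +
        w i * (x : ∀ _ : ℤ, ℂ) (i + 1)

/-- `A` acts on `ℓᵖ(ℕ)` as the semi-infinite tridiagonal matrix with subdiagonal `u`
(entries `a_{i,i-1} = u i` for `i ≥ 1`), main diagonal `v` and superdiagonal `w`. -/
def SemiActs {p : ℝ≥0∞} [Fact (1 ≤ p)] (A : SeqN p →L[ℂ] SeqN p) (u v w : ℕ → ℂ) : Prop :=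
  ∀ (x : SeqN p) (i : ℕ),
    (A x : ∀ _ : ℕ, ℂ) i =
      (if i = 0 then 0 else u i * (x : ∀ _ : ℕ, ℂ) (i - 1)) + v i * (x : ∀ _ : ℕ, ℂ) i +
        w i * (x : ∀ _ : ℕ, ℂ) (i + 1)

/-- membership in `M(U,V,W)`: bi-infinite tridiagonal operators over `(U,V,W)`. -/
def MemM (U V W : Set ℂ) {p : ℝ≥0∞} [Fact (1 ≤ p)] (A : SeqZ p →L[ℂ] SeqZ p) : Prop :=
  ∃ u v w : ℤ → ℂ, RangesIn U V W u v w ∧ BiActs A u v w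

/-- membership in `M₊(U,V,W)`: semi-infinite tridiagonal operators over `(U,V,W)`. -/
def MemMPlus (U V W : Set ℂ) {p : ℝ≥0∞} [Fact (1 ≤ p)] (A : SeqN p →L[ℂ] SeqN p) : Prop :=
  ∃ u v w : ℕ → ℂ, RangesIn U V W u v w ∧ SemiActs A u v w

/-- pseudoergodicity of bi-infinite diagonal data: every finite pattern of diagonals over
`(U,V,W)` is reproduced to arbitrary accuracy somewhere along the diagonals. -/
def PseudoergodicZ (U V W : Set ℂ) (u v w : ℤ → ℂ) : Prop :=
  ∀ (n : ℕ) (bu bv bw : Fin n → ℂ), RangesIn U V W bu bv bw →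
    ∀ ε : ℝ, 0 < ε → ∃ k : ℤ, ∀ i : Fin n,
      ‖u (k + (i : ℕ)) - bu i‖ < ε ∧ ‖v (k + (i : ℕ)) - bv i‖ < ε ∧
        ‖w (k + (i : ℕ)) - bw i‖ < ε

/-- pseudoergodicity of semi-infinite diagonal data. -/
def PseudoergodicN (U V W : Set ℂ) (u v w : ℕ → ℂ) : Prop :=
  ∀ (n : ℕ) (bu bv bw : Fin n → ℂ), RangesIn U V W bu bv bw →
    ∀ ε : ℝ, 0 < ε → ∃ k : ℕ, ∀ i : Fin n,
      ‖u (k + (i : ℕ)) - bu i‖ < ε ∧ ‖v (k + (i : ℕ)) - bv i‖ < ε ∧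
        ‖w (k + (i : ℕ)) - bw i‖ < ε

/-- membership in `PE(U,V,W)`: pseudoergodic bi-infinite operators. -/
def MemPE (U V W : Set ℂ) {p : ℝ≥0∞} [Fact (1 ≤ p)] (A : SeqZ p →L[ℂ] SeqZ p) : Prop :=
  ∃ u v w : ℤ → ℂ, RangesIn U V W u v w ∧ PseudoergodicZ U V W u v w ∧ BiActs A u v w

/-- membership in `PE₊(U,V,W)`: pseudoergodic semi-infinite operators. -/
def MemPEPlus (U V W : Set ℂ) {p : ℝ≥0∞} [Fact (1 ≤ p)] (A : SeqN p →L[ℂ] SeqN p) : Prop :=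
  ∃ u v w : ℕ → ℂ, RangesIn U V W u v w ∧ PseudoergodicN U V W u v w ∧ SemiActs A u v w

/-- `(U,V,W)` is compatible: every operator in `M(U,V,W)` is invertible on `ℓᵖ(ℤ)`
for every `p ∈ [1,∞]`. -/
def Compatible (U V W : Set ℂ) : Prop :=
  ∀ (p : ℝ≥0∞) [Fact (1 ≤ p)], ∀ A : SeqZ p →L[ℂ] SeqZ p, MemM U V W A → IsUnit A

/-- `α(A)`: the dimension of the kernel. -/
def alphaDim {E : Type*} [NormedAddCommGroup E] [NormedSpace ℂ E] (A : E →L[ℂ] E) : ℕ :=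
  Module.finrank ℂ (LinearMap.ker (A : E →ₗ[ℂ] E))

/-- `β(A)`: the codimension of the range. -/
def betaDim {E : Type*} [NormedAddCommGroup E] [NormedSpace ℂ E] (A : E →L[ℂ] E) : ℕ :=
  Module.finrank ℂ (E ⧸ LinearMap.range (A : E →ₗ[ℂ] E))

/-- `A` is a Fredholm operator: finite-dimensional kernel and finite-codimensional range. -/
def IsFredholmOp {E : Type*} [NormedAddCommGroup E] [NormedSpace ℂ E] (A : E →L[ℂ] E) : Prop :=
  FiniteDimensional ℂ (LinearMap.ker (A : E →ₗ[ℂ] E)) ∧ FiniteDimensional ℂ (E ⧸ LinearMap.range (A : E →ₗ[ℂ] E))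

/-- the Fredholm index `ind A = α(A) - β(A)`. -/
def fredIndex {E : Type*} [NormedAddCommGroup E] [NormedSpace ℂ E] (A : E →L[ℂ] E) : ℤ :=
  (alphaDim A : ℤ) - (betaDim A : ℤ)

/-- `(U,V,W)` is compatible and the common Fredholm index `κ(U,V,W)` of the semi-infinite
operators in `M₊(U,V,W)` equals `k`. -/
def KappaIs (U V W : Set ℂ) (k : ℤ) : Prop :=
  Compatible U V W ∧
    ∀ (p : ℝ≥0∞) [Fact (1 ≤ p)], ∀ B : SeqN p →L[ℂ] SeqN p, MemMPlus U V W B →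
      IsFredholmOp B ∧ fredIndex B = k

/-- union of the `ℓᵖ`-spectra of all operators in `M(U,V,W)`, at exponent `p`. -/
def specSetZAt (U V W : Set ℂ) (p : ℝ≥0∞) [Fact (1 ≤ p)] : Set ℂ :=
  {lam | ∃ C : SeqZ p →L[ℂ] SeqZ p, MemM U V W C ∧ lam ∈ spectrum ℂ C}

/-- union of the `ℓᵖ`-spectra of all operators in `M₊(U,V,W)`, at exponent `p`. -/
def specSetNAt (U V W : Set ℂ) (p : ℝ≥0∞) [Fact (1 ≤ p)] : Set ℂ :=
  {lam | ∃ C : SeqN p →L[ℂ] SeqN p, MemMPlus U V W C ∧ lam ∈ spectrum ℂ C}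

/-- `Σ(U,V,W)`: the union of the spectra of all operators in `M(U,V,W)`. -/
def SigmaSet (U V W : Set ℂ) : Set ℂ :=
  ⋃ (p : ℝ≥0∞), ⋃ (h : Fact (1 ≤ p)), @specSetZAt U V W p h

/-- `Σ₊(U,V,W)`: the union of the spectra of all operators in `M₊(U,V,W)`. -/
def SigmaPlusSet (U V W : Set ℂ) : Set ℂ :=
  ⋃ (p : ℝ≥0∞), ⋃ (h : Fact (1 ≤ p)), @specSetNAt U V W p h

/-- `V - λ`. -/
def shiftSet (V : Set ℂ) (lam : ℂ) : Set ℂ := (fun v => v - lam) '' V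

/-- `Σ_k(U,V,W) = {λ : (U, V-λ, W) compatible with κ(U, V-λ, W) = k}`. -/
def SigmaK (U V W : Set ℂ) (k : ℤ) : Set ℂ := {lam | KappaIs U (shiftSet V lam) W k}

/-- `Σ_{±1} = Σ_{-1} ∪ Σ_1`. -/
def SigmaPM (U V W : Set ℂ) : Set ℂ := SigmaK U V W (-1) ∪ SigmaK U V W 1

/-- the ellipse `E(u,v,w) = {u t + v + w/t : |t| = 1}`. -/
def ellipse (u v w : ℂ) : Set ℂ := (fun t : ℂ => u * t + v + w / t) '' {t : ℂ | ‖t‖ = 1}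

open Polynomial in
open Classical in
/-- winding number of the loop `t ↦ u t + v + w/t` (`t` on the unit circle, traversed
counter-clockwise) around `lam`, computed, via the argument principle, as the number of
roots (with multiplicity) of `u t² + (v - λ) t + w` in the open unit disk minus the order
of the pole at `0`.  (Valid whenever `lam` does not lie on the ellipse itself.) -/
def windingAt (u v w lam : ℂ) : ℤ :=
  (((C u * X ^ 2 + C (v - lam) * X + C w).roots.filter (fun z => ‖z‖ < 1)).card : ℤ) - 1

/-- `lam` lies inside the oriented ellipse `E(u,v,w)`: not on it, nonzero winding number. -/
def insideEllipse (u v w lam : ℂ) : Prop :=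
  lam ∉ ellipse u v w ∧ windingAt u v w lam ≠ 0

/-- `E_∩`: points inside all the ellipses `E(u,v,w)`, `(u,v,w) ∈ U × V × W`. -/
def Ecap (U V W : Set ℂ) : Set ℂ :=
  {lam | ∀ u ∈ U, ∀ v ∈ V, ∀ w ∈ W, insideEllipse u v w lam}

/-- `E₁`: points of `E_∩` circumnavigated clockwise (winding number `-1`) by all ellipses. -/
def Eone (U V W : Set ℂ) : Set ℂ :=
  {lam ∈ Ecap U V W | ∀ u ∈ U, ∀ v ∈ V, ∀ w ∈ W, windingAt u v w lam = -1}

/-- `E_{-1}`: points of `E_∩` circumnavigated counter-clockwise (winding number `1`). -/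
def EmOne (U V W : Set ℂ) : Set ℂ :=
  {lam ∈ Ecap U V W | ∀ u ∈ U, ∀ v ∈ V, ∀ w ∈ W, windingAt u v w lam = 1}

/-- `E_{±1} = E_{-1} ∪ E₁`. -/
def Epm (U V W : Set ℂ) : Set ℂ := EmOne U V W ∪ Eone U V W

/-- `E_∪`: the union of the filled ellipses. -/
def Ecup (U V W : Set ℂ) : Set ℂ :=
  ⋃ (u ∈ U) (v ∈ V) (w ∈ W), convexHull ℝ (ellipse u v w)

/-- `sup` of moduli over a set, e.g. `u^* = max_{u ∈ U} |u|`. -/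
def supAbs (S : Set ℂ) : ℝ := sSup ((fun z : ℂ => ‖z‖) '' S)

/-- `inf` of moduli over a set, e.g. `u_* = min_{u ∈ U} |u|`. -/
def infAbs (S : Set ℂ) : ℝ := sInf ((fun z : ℂ => ‖z‖) '' S)

/-- `M_p = sup_{B ∈ M(U,V,W)} ‖B‖_p`. -/
def Mnorm (U V W : Set ℂ) (p : ℝ≥0∞) [Fact (1 ≤ p)] : ℝ :=
  sSup {x : ℝ | ∃ B : SeqZ p →L[ℂ] SeqZ p, MemM U V W B ∧ x = ‖B‖}

/-- `N_p = sup_{B ∈ M(U,V,W)} ‖B⁻¹‖_p`. -/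
def Nnorm (U V W : Set ℂ) (p : ℝ≥0∞) [Fact (1 ≤ p)] : ℝ :=
  sSup {x : ℝ | ∃ B : SeqZ p →L[ℂ] SeqZ p, MemM U V W B ∧ x = ‖Ring.inverse B‖}

/-- `M_{+,p} = sup_{B₊ ∈ M₊(U,V,W)} ‖B₊‖_p`. -/
def MnormPlus (U V W : Set ℂ) (p : ℝ≥0∞) [Fact (1 ≤ p)] : ℝ :=
  sSup {x : ℝ | ∃ B : SeqN p →L[ℂ] SeqN p, MemMPlus U V W B ∧ x = ‖B‖}

/-- `N_{+,p} = sup_{B₊ ∈ M₊(U,V,W)} ‖B₊⁻¹‖_p`. -/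
def NnormPlus (U V W : Set ℂ) (p : ℝ≥0∞) [Fact (1 ≤ p)] : ℝ :=
  sSup {x : ℝ | ∃ B : SeqN p →L[ℂ] SeqN p, MemMPlus U V W B ∧ x = ‖Ring.inverse B‖}

/-- `p` is favourable for `(U,V,W)`: `‖A₊⁻¹‖_p = N_{+,p} = N_p` for all `A₊ ∈ PE₊(U,V,W)`. -/
def Favourable (U V W : Set ℂ) (p : ℝ≥0∞) [Fact (1 ≤ p)] : Prop :=
  ∀ A : SeqN p →L[ℂ] SeqN p, MemPEPlus U V W A →
    ‖Ring.inverse A‖ = NnormPlus U V W p ∧ NnormPlus U V W p = Nnorm U V W p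

/-- the `n × n` tridiagonal matrix with diagonals `u` (sub), `v` (main), `w` (super). -/
def JacobiMatrix {n : ℕ} (u v w : Fin n → ℂ) : Matrix (Fin n) (Fin n) ℂ :=
  fun i j =>
    if ((i : ℕ) : ℤ) = ((j : ℕ) : ℤ) + 1 then u i
    else if i = j then v i
    else if ((j : ℕ) : ℤ) = ((i : ℕ) : ℤ) + 1 then w i
    else 0

/-- the `ℓᵖ` norm of a finite complex vector. -/
def pVecNorm (p : ℝ≥0∞) [Fact (1 ≤ p)] {n : ℕ} (x : Fin n → ℂ) : ℝ :=
  ‖(WithLp.equiv p (Fin n → ℂ)).symm x‖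

/-- the operator norm of an `n × n` matrix acting on `(ℂⁿ, ‖·‖_p)`. -/
def matOpNorm (p : ℝ≥0∞) [Fact (1 ≤ p)] {n : ℕ} (F : Matrix (Fin n) (Fin n) ℂ) : ℝ :=
  sInf {c : ℝ | 0 ≤ c ∧ ∀ x : Fin n → ℂ, pVecNorm p (F.mulVec x) ≤ c * pVecNorm p x}

/-- the `p`-operator norm of the inverse matrix. -/
def matInvNorm (p : ℝ≥0∞) [Fact (1 ≤ p)] {n : ℕ} (F : Matrix (Fin n) (Fin n) ℂ) : ℝ :=
  matOpNorm p F⁻¹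

/-- `M_{n,p}`: sup of the `p`-norms of the `n × n` tridiagonal matrices over `(U,V,W)`. -/
def MnormFinN (U V W : Set ℂ) (p : ℝ≥0∞) [Fact (1 ≤ p)] (n : ℕ) : ℝ :=
  sSup {x : ℝ | ∃ u v w : Fin n → ℂ, RangesIn U V W u v w ∧
    x = matOpNorm p (JacobiMatrix u v w)}

/-- `M_{fin,p}`: sup of the `p`-norms of all finite tridiagonal matrices over `(U,V,W)`. -/
def MnormFin (U V W : Set ℂ) (p : ℝ≥0∞) [Fact (1 ≤ p)] : ℝ :=
  sSup {x : ℝ | ∃ (n : ℕ) (u v w : Fin n → ℂ), RangesIn U V W u v w ∧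
    x = matOpNorm p (JacobiMatrix u v w)}

/-- `N_{fin,p}`: sup of the `p`-norms of the inverses of all finite tridiagonal matrices. -/
def NnormFin (U V W : Set ℂ) (p : ℝ≥0∞) [Fact (1 ≤ p)] : ℝ :=
  sSup {x : ℝ | ∃ (n : ℕ) (u v w : Fin n → ℂ), RangesIn U V W u v w ∧
    x = matInvNorm p (JacobiMatrix u v w)}

/-- entry `(i,j)` of the bi-infinite tridiagonal matrix with diagonals `u`, `v`, `w`. -/
def secEntryZ (u v w : ℤ → ℂ) (i j : ℤ) : ℂ :=
  if i = j + 1 then u i else if i = j then v i else if j = i + 1 then w i else 0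

/-- the finite section `(a_{ij})_{i,j=l}^{r}` of the bi-infinite tridiagonal matrix. -/
def finSecZ (u v w : ℤ → ℂ) (l r : ℤ) :
    Matrix (Fin (r + 1 - l).toNat) (Fin (r + 1 - l).toNat) ℂ :=
  fun i j => secEntryZ u v w (l + (i : ℕ)) (l + (j : ℕ))

/-- entry `(i,j)` of the semi-infinite tridiagonal matrix with diagonals `u`, `v`, `w`. -/
def secEntryN (u v w : ℕ → ℂ) (i j : ℕ) : ℂ :=
  if i = j + 1 then u i else if i = j then v i else if j = i + 1 then w i else 0

/-- the `n`-th finite section (first `n` rows and columns) of the semi-infinite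
tridiagonal matrix with diagonals `u`, `v`, `w`. -/
def finSecN (u v w : ℕ → ℂ) (n : ℕ) : Matrix (Fin n) (Fin n) ℂ :=
  fun i j => secEntryN u v w i j

/-- stability of the sequence of finite sections of a bi-infinite tridiagonal matrix with
cut-off sequences `l`, `r`: eventually invertible with uniformly bounded inverses. -/
def StableSecsZ (p : ℝ≥0∞) [Fact (1 ≤ p)] (u v w : ℤ → ℂ) (l r : ℕ → ℤ) : Prop :=
  ∃ (n₀ : ℕ) (c : ℝ), ∀ n, n₀ ≤ n →
    IsUnit (finSecZ u v w (l n) (r n)) ∧ matInvNorm p (finSecZ u v w (l n) (r n)) ≤ c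

/-- stability of the sequence of finite sections of a semi-infinite tridiagonal matrix. -/
def StableSecsN (p : ℝ≥0∞) [Fact (1 ≤ p)] (u v w : ℕ → ℂ) (r : ℕ → ℕ) : Prop :=
  ∃ (n₀ : ℕ) (c : ℝ), ∀ n, n₀ ≤ n →
    IsUnit (finSecN u v w (r n)) ∧ matInvNorm p (finSecN u v w (r n)) ≤ c

/-- the full finite section method applies to every operator in `M(U,V,W)`:
the operator is invertible and the finite sections `(a_{ij})_{i,j=-n}^{n}` are stable. -/
def FullFSMAppliesZ (U V W : Set ℂ) : Prop :=
  ∀ (p : ℝ≥0∞) [Fact (1 ≤ p)], ∀ u v w : ℤ → ℂ, RangesIn U V W u v w →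
    ∀ A : SeqZ p →L[ℂ] SeqZ p, BiActs A u v w →
      IsUnit A ∧ StableSecsZ p u v w (fun n => -(n : ℤ)) (fun n => (n : ℤ))

/-- the full finite section method applies to every operator in `M₊(U,V,W)`:
the operator is invertible and the finite sections `(a_{ij})_{i,j=1}^{n}` are stable. -/
def FullFSMAppliesN (U V W : Set ℂ) : Prop :=
  ∀ (p : ℝ≥0∞) [Fact (1 ≤ p)], ∀ u v w : ℕ → ℂ, RangesIn U V W u v w →
    ∀ A : SeqN p →L[ℂ] SeqN p, SemiActs A u v w →
      IsUnit A ∧ StableSecsN p u v w (fun n => n)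

/-- one operator in `PE₊(U,V,W)` is invertible (on some, equivalently each, `ℓᵖ(ℕ)`). -/
def PEPlusInvAt (U V W : Set ℂ) (p : ℝ≥0∞) [Fact (1 ≤ p)] : Prop :=
  ∃ B : SeqN p →L[ℂ] SeqN p, MemPEPlus U V W B ∧ IsUnit B

def ExistsInvPEPlus (U V W : Set ℂ) : Prop :=
  ∃ (p : ℝ≥0∞) (h : Fact (1 ≤ p)), @PEPlusInvAt U V W p h

/-- one operator in `PE₊(U,V,W)` is Fredholm of index `0`. -/
def PEPlusFred0At (U V W : Set ℂ) (p : ℝ≥0∞) [Fact (1 ≤ p)] : Prop :=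
  ∃ B : SeqN p →L[ℂ] SeqN p, MemPEPlus U V W B ∧ IsFredholmOp B ∧ fredIndex B = 0

def ExistsFred0PEPlus (U V W : Set ℂ) : Prop :=
  ∃ (p : ℝ≥0∞) (h : Fact (1 ≤ p)), @PEPlusFred0At U V W p h

/-- all operators in `M₊(U,V,W)` are invertible (on every `ℓᵖ(ℕ)`). -/
def AllMPlusInv (U V W : Set ℂ) : Prop :=
  ∀ (p : ℝ≥0∞) [Fact (1 ≤ p)], ∀ B : SeqN p →L[ℂ] SeqN p, MemMPlus U V W B → IsUnit B

/-- the `ε`-pseudospectrum of a bounded operator (the spectrum together with the points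
where the resolvent has norm `> 1/ε`). -/
def pspec {E : Type*} [NormedAddCommGroup E] [NormedSpace ℂ E] (ε : ℝ)
    (A : E →L[ℂ] E) : Set ℂ :=
  {lam | ¬IsUnit (A - lam • (1 : E →L[ℂ] E)) ∨
    1 / ε < ‖Ring.inverse (A - lam • (1 : E →L[ℂ] E))‖}

/-- the `ε`-pseudospectrum of an `n × n` matrix, in the `p`-operator norm. -/
def pspecMat (p : ℝ≥0∞) [Fact (1 ≤ p)] {n : ℕ} (ε : ℝ) (F : Matrix (Fin n) (Fin n) ℂ) :
    Set ℂ :=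
  {lam | ¬IsUnit (F - lam • (1 : Matrix (Fin n) (Fin n) ℂ)) ∨
    1 / ε < matInvNorm p (F - lam • (1 : Matrix (Fin n) (Fin n) ℂ))}

/-- `Σ_ε^p`: union of the `ε`-pseudospectra of all operators in `M(U,V,W)`. -/
def SigmaEps (U V W : Set ℂ) (p : ℝ≥0∞) [Fact (1 ≤ p)] (ε : ℝ) : Set ℂ :=
  {lam | ∃ B : SeqZ p →L[ℂ] SeqZ p, MemM U V W B ∧ lam ∈ pspec ε B}

/-- `Σ_{+,ε}^p`: union of the `ε`-pseudospectra of all operators in `M₊(U,V,W)`. -/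
def SigmaPlusEps (U V W : Set ℂ) (p : ℝ≥0∞) [Fact (1 ≤ p)] (ε : ℝ) : Set ℂ :=
  {lam | ∃ B : SeqN p →L[ℂ] SeqN p, MemMPlus U V W B ∧ lam ∈ pspec ε B}

/-- `p` is favourable for all the (compatible, index zero) shifted triples `(U, V-λ, W)`. -/
def FavAll (U V W : Set ℂ) (p : ℝ≥0∞) [Fact (1 ≤ p)] : Prop :=
  ∀ lam : ℂ, KappaIs U (shiftSet V lam) W 0 → Favourable U (shiftSet V lam) W p

end

section St6Aux

namespace St6

lemma exists_tridiag_op (uu vv ww : ℕ → ℂ) (R : ℝ) (hR : 0 ≤ R)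
    (hu : ∀ i, ‖uu i‖ ≤ R) (hv : ∀ i, ‖vv i‖ ≤ R) (hw : ∀ i, ‖ww i‖ ≤ R) :
    ∃ B : SeqN ∞ →L[ℂ] SeqN ∞, SemiActs B uu vv ww := by
  classical
  set g : (∀ _ : ℕ, ℂ) → (∀ _ : ℕ, ℂ) := fun f i =>
    (if i = 0 then 0 else uu i * f (i - 1)) + vv i * f i + ww i * f (i + 1) with hg
  have hbd : ∀ (f : SeqN ∞) (i : ℕ), ‖g (⇑f) i‖ ≤ 3 * R * ‖f‖ := by
    intro f i
    have happ : ∀ j, ‖(f : ∀ _ : ℕ, ℂ) j‖ ≤ ‖f‖ := fun j =>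
      lp.norm_apply_le_norm ENNReal.top_ne_zero f j
    have h1 : ‖(if i = 0 then (0 : ℂ) else uu i * (f : ∀ _ : ℕ, ℂ) (i - 1))‖ ≤ R * ‖f‖ := by
      split_ifs with h
      · rw [norm_zero]; positivity
      · rw [norm_mul]
        exact mul_le_mul (hu i) (happ _) (norm_nonneg _) hR
    have h2 : ‖vv i * (f : ∀ _ : ℕ, ℂ) i‖ ≤ R * ‖f‖ := by
      rw [norm_mul]; exact mul_le_mul (hv i) (happ _) (norm_nonneg _) hR
    have h3 : ‖ww i * (f : ∀ _ : ℕ, ℂ) (i + 1)‖ ≤ R * ‖f‖ := by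
      rw [norm_mul]; exact mul_le_mul (hw i) (happ _) (norm_nonneg _) hR
    calc ‖g (⇑f) i‖ ≤ ‖(if i = 0 then (0 : ℂ) else uu i * (f : ∀ _ : ℕ, ℂ) (i - 1))
          + vv i * (f : ∀ _ : ℕ, ℂ) i‖ + ‖ww i * (f : ∀ _ : ℕ, ℂ) (i + 1)‖ := norm_add_le _ _
      _ ≤ (‖(if i = 0 then (0 : ℂ) else uu i * (f : ∀ _ : ℕ, ℂ) (i - 1))‖
          + ‖vv i * (f : ∀ _ : ℕ, ℂ) i‖) + ‖ww i * (f : ∀ _ : ℕ, ℂ) (i + 1)‖ := by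
            gcongr; exact norm_add_le _ _
      _ ≤ (R * ‖f‖ + R * ‖f‖) + R * ‖f‖ := by gcongr
      _ = 3 * R * ‖f‖ := by ring
  have hmem : ∀ f : SeqN ∞, Memℓp (g ⇑f) ∞ := fun f =>
    memℓp_infty_iff.2 ⟨3 * R * ‖f‖, by rintro x ⟨i, rfl⟩; exact hbd f i⟩
  set L : SeqN ∞ →ₗ[ℂ] SeqN ∞ :=
    { toFun := fun f => ⟨g ⇑f, hmem f⟩
      map_add' := by
        intro f1 f2
        apply lp.ext
        funext i
        show g (⇑(f1 + f2)) i = g (⇑f1) i + g (⇑f2) i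
        rw [lp.coeFn_add]
        simp only [hg, Pi.add_apply]
        split_ifs <;> ring
      map_smul' := by
        intro c f
        apply lp.ext
        funext i
        show g (⇑(c • f)) i = c • g (⇑f) i
        rw [lp.coeFn_smul]
        simp only [hg, Pi.smul_apply, smul_eq_mul]
        split_ifs <;> ring } with hL
  refine ⟨L.mkContinuous (3 * R) (fun f => ?_), ?_⟩
  · exact lp.norm_le_of_forall_le (by positivity) (fun i => hbd f i)
  · intro x i
    rfl

lemma isUnit_inj {p : ℝ≥0∞} [Fact (1 ≤ p)] {B : SeqN p →L[ℂ] SeqN p} (h : IsUnit B) :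
    Function.Injective B := by
  rcases h with ⟨u, rfl⟩
  intro x y hxy
  have h1 : (↑u⁻¹ * ↑u : SeqN p →L[ℂ] SeqN p) = 1 := u.inv_mul
  have h2 : ∀ z : SeqN p, (↑u⁻¹ : SeqN p →L[ℂ] SeqN p) ((↑u : SeqN p →L[ℂ] SeqN p) z) = z := by
    intro z
    have h3 := congrArg (fun T : SeqN p →L[ℂ] SeqN p => T z) h1
    simp only [ContinuousLinearMap.mul_apply, ContinuousLinearMap.one_apply] at h3
    exact h3
  rw [← h2 x, ← h2 y, hxy]

lemma isUnit_surj {p : ℝ≥0∞} [Fact (1 ≤ p)] {B : SeqN p →L[ℂ] SeqN p} (h : IsUnit B) :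
    Function.Surjective B := by
  rcases h with ⟨u, rfl⟩
  intro z
  refine ⟨(↑u⁻¹ : SeqN p →L[ℂ] SeqN p) z, ?_⟩
  have h1 : (↑u * ↑u⁻¹ : SeqN p →L[ℂ] SeqN p) = 1 := u.mul_inv
  have h3 := congrArg (fun T : SeqN p →L[ℂ] SeqN p => T z) h1
  simp only [ContinuousLinearMap.mul_apply, ContinuousLinearMap.one_apply] at h3
  exact h3

/-- summability from a quasi-geometric bound. -/
lemma summable_of_quasi_geom (f : ℕ → ℂ) (Cb q : ℝ) (hCb : 0 ≤ Cb) (hq0 : 0 ≤ q) (hq1 : q < 1)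
    (N : ℕ) (hN : 0 < N) (hf : ∀ i, ‖f i‖ ≤ Cb * q ^ (i / N)) :
    Summable fun i => ‖f i‖ := by
  rcases eq_or_lt_of_le hq0 with hq | hq
  · -- q = 0
    apply summable_of_ne_finset_zero (s := Finset.range N)
    intro i hi
    have hiN : N ≤ i := by simpa using hi
    have h1 : 1 ≤ i / N := (Nat.one_le_div_iff hN).2 hiN
    have h2 : q ^ (i / N) = 0 := by
      rw [← hq]
      exact zero_pow (by omega)
    have := hf i
    rw [h2, mul_zero] at this
    have : ‖f i‖ = 0 := le_antisymm this (norm_nonneg _)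
    simpa using this
  · -- 0 < q
    set r : ℝ := q ^ ((N : ℝ)⁻¹) with hr
    have hr0 : 0 ≤ r := Real.rpow_nonneg hq0 _
    have hr1 : r < 1 := Real.rpow_lt_one hq0 hq1 (by positivity)
    have key : ∀ i : ℕ, q ^ (i / N) ≤ q⁻¹ * r ^ i := by
      intro i
      have h1 : q ^ (i / N) = q ^ (((i / N : ℕ) : ℝ)) := (Real.rpow_natCast q (i / N)).symm
      have h2 : q⁻¹ * r ^ i = q ^ ((i : ℝ) * (N : ℝ)⁻¹ - 1) := by
        rw [Real.rpow_sub hq]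
        rw [Real.rpow_one]
        rw [← Real.rpow_natCast r i, hr, ← Real.rpow_mul hq0]
        rw [mul_comm ((N:ℝ)⁻¹) (i:ℝ)]
        ring
      rw [h1, h2]
      apply Real.rpow_le_rpow_of_exponent_ge hq (le_of_lt hq1)
      -- (i : ℝ) * (N)⁻¹ - 1 ≤ (i / N : ℕ)
      have h3 : i - (N - 1) ≤ N * (i / N) := by
        have := Nat.lt_succ_of_le (Nat.mod_lt i hN).le
        have hmod := Nat.mod_lt i hN
        have := Nat.div_add_mod i N
        omega
      have h4 : (i : ℝ) ≤ (N : ℝ) * ((i / N : ℕ) : ℝ) + (N : ℝ) - 1 := by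
        have := Nat.div_add_mod i N
        have hmod := Nat.mod_lt i hN
        push_cast
        have h5 : ((i % N : ℕ) : ℝ) ≤ (N : ℝ) - 1 := by
          have : (i % N : ℕ) ≤ N - 1 := by omega
          calc ((i % N : ℕ) : ℝ) ≤ ((N - 1 : ℕ) : ℝ) := by exact_mod_cast this
            _ = (N : ℝ) - 1 := by
              have : (1 : ℕ) ≤ N := hN
              push_cast [Nat.cast_sub this]
              ring
        have h6 : (i : ℝ) = (N : ℝ) * ((i / N : ℕ) : ℝ) + ((i % N : ℕ) : ℝ) := by
          exact_mod_cast (Nat.div_add_mod i N).symm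
        linarith
      have hNpos : (0 : ℝ) < N := by exact_mod_cast hN
      have h7 : (i : ℝ) / N ≤ ((i / N : ℕ) : ℝ) + 1 := by
        rw [div_le_iff₀ hNpos]
        nlinarith
      have h8 : (i : ℝ) * (N : ℝ)⁻¹ = (i : ℝ) / N := by ring
      linarith
    have hgeom : Summable (fun i : ℕ => (Cb * q⁻¹) * r ^ i) :=
      (summable_geometric_of_lt_one hr0 hr1).mul_left _
    apply Summable.of_nonneg_of_le (fun i => norm_nonneg _) (fun i => ?_) hgeom
    calc ‖f i‖ ≤ Cb * q ^ (i / N) := hf i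
      _ ≤ Cb * (q⁻¹ * r ^ i) := mul_le_mul_of_nonneg_left (key i) hCb
      _ = (Cb * q⁻¹) * r ^ i := by ring

lemma exists_bound (U : Set ℂ) (hU : IsCompact U) : ∃ R : ℝ, 0 ≤ R ∧ ∀ z ∈ U, ‖z‖ ≤ R := by
  obtain ⟨C, hC⟩ := hU.isBounded.exists_norm_le
  exact ⟨max C 0, le_max_right _ _, fun z hz => (hC z hz).trans (le_max_left _ _)⟩

/-- Non-injectivity contradiction: a bounded nonzero kernel sequence contradicts
invertibility of all tridiagonal operators. -/
lemma noninj (U V W : Set ℂ) (hUc : IsCompact U) (hVc : IsCompact V) (hWc : IsCompact W)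
    (hinv : AllMPlusInv U V W) (α β γ yy : ℕ → ℂ)
    (hα : ∀ i, α i ∈ U) (hβ : ∀ i, β i ∈ V) (hγ : ∀ i, γ i ∈ W)
    (rows : ∀ i, (if i = 0 then (0 : ℂ) else α i * yy (i - 1)) + β i * yy i + γ i * yy (i + 1) = 0)
    (Cb : ℝ) (hCb : ∀ i, ‖yy i‖ ≤ Cb) (i0 : ℕ) (hy0 : yy i0 ≠ 0) : False := by
  obtain ⟨RU, hRU0, hRU⟩ := exists_bound U hUc
  obtain ⟨RV, hRV0, hRV⟩ := exists_bound V hVc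
  obtain ⟨RW, hRW0, hRW⟩ := exists_bound W hWc
  set R : ℝ := max RU (max RV RW) with hRdef
  have hR : 0 ≤ R := le_trans hRU0 (le_max_left _ _)
  obtain ⟨B, hB⟩ := exists_tridiag_op α β γ R hR
    (fun i => (hRU _ (hα i)).trans (le_max_left _ _))
    (fun i => (hRV _ (hβ i)).trans ((le_max_left _ _).trans (le_max_right _ _)))
    (fun i => (hRW _ (hγ i)).trans ((le_max_right _ _).trans (le_max_right _ _)))
  have hun : IsUnit B := hinv ∞ B ⟨α, β, γ, ⟨hα, hβ, hγ⟩, hB⟩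
  have hy : Memℓp yy ∞ := memℓp_infty_iff.2 ⟨Cb, by rintro x ⟨i, rfl⟩; exact hCb i⟩
  set Y : SeqN ∞ := ⟨yy, hy⟩ with hY
  have hBY : B Y = 0 := by
    apply lp.ext
    funext i
    have h1 := hB Y i
    have h2 : (Y : ∀ _ : ℕ, ℂ) = yy := rfl
    rw [h2] at h1
    rw [h1]
    simpa using rows i
  have hY0 : Y = 0 := isUnit_inj hun (by rw [hBY]; simp)
  have : yy i0 = 0 := by
    have := congrArg (fun f : SeqN ∞ => (f : ∀ _ : ℕ, ℂ) i0) hY0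
    simpa using this
  exact hy0 this

/-- Non-surjectivity contradiction: a summable nonzero "left kernel" sequence contradicts
invertibility. Here `α' ∈ W`, `β' ∈ V`, `γ' ∈ U` and the relation is the transposed row
relation. -/
lemma nonsurj (U V W : Set ℂ) (hUc : IsCompact U) (hVc : IsCompact V) (hWc : IsCompact W)
    (hinv : AllMPlusInv U V W) (u₀ : ℂ) (hu₀ : u₀ ∈ U) (α' β' γ' zz : ℕ → ℂ)
    (hα : ∀ i, α' i ∈ W) (hβ : ∀ i, β' i ∈ V) (hγ : ∀ i, γ' i ∈ U)
    (rows : ∀ j, (if j = 0 then (0 : ℂ) else α' j * zz (j - 1)) + β' j * zz j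
      + γ' j * zz (j + 1) = 0)
    (hzsum : Summable fun i => ‖zz i‖) (hz0 : zz 0 ≠ 0) : False := by
  classical
  obtain ⟨RU, hRU0, hRU⟩ := exists_bound U hUc
  obtain ⟨RV, hRV0, hRV⟩ := exists_bound V hVc
  obtain ⟨RW, hRW0, hRW⟩ := exists_bound W hWc
  set R : ℝ := max RU (max RV RW) with hRdef
  have hR : 0 ≤ R := le_trans hRU0 (le_max_left _ _)
  have hUR : ∀ z ∈ U, ‖z‖ ≤ R := fun z hz => (hRU _ hz).trans (le_max_left _ _)
  have hVR : ∀ z ∈ V, ‖z‖ ≤ R := fun z hz =>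
    (hRV _ hz).trans ((le_max_left _ _).trans (le_max_right _ _))
  have hWR : ∀ z ∈ W, ‖z‖ ≤ R := fun z hz =>
    (hRW _ hz).trans ((le_max_right _ _).trans (le_max_right _ _))
  set uu : ℕ → ℂ := fun i => if i = 0 then u₀ else γ' (i - 1) with huu
  set ww : ℕ → ℂ := fun i => α' (i + 1) with hww
  have huuU : ∀ i, uu i ∈ U := by
    intro i
    rw [huu]; dsimp only
    split_ifs with h
    · exact hu₀
    · exact hγ _
  have hwwW : ∀ i, ww i ∈ W := fun i => hα _
  obtain ⟨B, hB⟩ := exists_tridiag_op uu β' ww R hR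
    (fun i => hUR _ (huuU i)) (fun i => hVR _ (hβ i)) (fun i => hWR _ (hwwW i))
  have hun : IsUnit B := hinv ∞ B ⟨uu, β', ww, ⟨huuU, hβ, hwwW⟩, hB⟩
  obtain ⟨g, hg⟩ := isUnit_surj hun (lp.single ∞ 0 1)
  set G : ℕ → ℂ := (g : ∀ _ : ℕ, ℂ) with hG
  have hGbd : ∀ i, ‖G i‖ ≤ ‖g‖ := fun i => lp.norm_apply_le_norm ENNReal.top_ne_zero g i
  have hcoord : ∀ i, (if i = 0 then (0 : ℂ) else uu i * G (i - 1)) + β' i * G i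
      + ww i * G (i + 1) = (if i = 0 then 1 else 0) := by
    intro i
    have h1 := hB g i
    have h2 : ((B g : SeqN ∞) : ∀ _ : ℕ, ℂ) i = ((lp.single ∞ 0 1 : SeqN ∞) : ∀ _ : ℕ, ℂ) i := by
      rw [hg]
    rw [h1] at h2
    rw [h2]
    by_cases hi : i = 0
    · subst hi
      rw [if_pos rfl]
      exact lp.single_apply_self (E := fun _ : ℕ => ℂ) ∞ 0 (1 : ℂ)
    · rw [lp.single_apply]; simp [hi]
  set f1 : ℕ → ℂ := fun i => zz i * (if i = 0 then (0 : ℂ) else uu i * G (i - 1)) with hf1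
  set f2 : ℕ → ℂ := fun i => zz i * (β' i * G i) with hf2
  set f3 : ℕ → ℂ := fun i => zz i * (ww i * G (i + 1)) with hf3
  have hbound : ∀ (c : ℂ) (j : ℕ), ‖c‖ ≤ R → ∀ i, ‖zz i * (c * G j)‖ ≤ ‖zz i‖ * (R * ‖g‖) := by
    intro c j hc i
    rw [norm_mul, norm_mul]
    apply mul_le_mul_of_nonneg_left _ (norm_nonneg _)
    exact mul_le_mul hc (hGbd j) (norm_nonneg _) hR
  have hs1 : Summable f1 := by
    apply Summable.of_norm_bounded (g := fun i => ‖zz i‖ * (R * ‖g‖)) (hzsum.mul_right _)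
    intro i
    rw [hf1]; dsimp only
    split_ifs with h
    · rw [mul_zero, norm_zero]; positivity
    · exact hbound _ _ (hUR _ (huuU i)) i
  have hs2 : Summable f2 := by
    apply Summable.of_norm_bounded (g := fun i => ‖zz i‖ * (R * ‖g‖)) (hzsum.mul_right _)
    intro i; exact hbound _ _ (hVR _ (hβ i)) i
  have hs3 : Summable f3 := by
    apply Summable.of_norm_bounded (g := fun i => ‖zz i‖ * (R * ‖g‖)) (hzsum.mul_right _)
    intro i; exact hbound _ _ (hWR _ (hwwW i)) i
  have htot : ∑' i, (f1 i + f2 i + f3 i) = zz 0 := by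
    have heq : ∀ i, f1 i + f2 i + f3 i = (if i = 0 then zz 0 else 0) := by
      intro i
      have h1 : f1 i + f2 i + f3 i = zz i * ((if i = 0 then (0 : ℂ) else uu i * G (i - 1))
          + β' i * G i + ww i * G (i + 1)) := by
        rw [hf1, hf2, hf3]; ring
      rw [h1, hcoord i]
      split_ifs with h
      · subst h; ring
      · ring
    rw [tsum_congr heq]
    exact tsum_ite_eq 0 (fun _ => zz 0)
  -- reindex f1
  set t1 : ℕ → ℂ := fun j => zz (j + 1) * (γ' j * G j) with ht1
  have h1eq : ∀ j, f1 (j + 1) = t1 j := by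
    intro j
    rw [hf1, ht1]; dsimp only
    rw [if_neg (Nat.succ_ne_zero j), huu]; dsimp only
    rw [if_neg (Nat.succ_ne_zero j)]
    simp only [Nat.add_sub_cancel]
  have h11 : ∑' i, f1 i = ∑' j, t1 j := by
    rw [Summable.tsum_eq_zero_add hs1]
    have h0 : f1 0 = 0 := by rw [hf1]; simp
    rw [h0, zero_add]
    exact tsum_congr h1eq
  have hst1 : Summable t1 := ((summable_nat_add_iff 1).2 hs1).congr h1eq
  -- reindex f3
  set F3 : ℕ → ℂ := fun j => if j = 0 then (0 : ℂ) else zz (j - 1) * (α' j * G j) with hF3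
  have hsF3 : Summable F3 := by
    have hgs : Summable (fun j : ℕ => if j = 0 then (0 : ℝ) else ‖zz (j - 1)‖ * (R * ‖g‖)) := by
      apply (summable_nat_add_iff 1).1
      have : (fun j : ℕ => if j + 1 = 0 then (0 : ℝ) else ‖zz (j + 1 - 1)‖ * (R * ‖g‖))
          = fun j : ℕ => ‖zz j‖ * (R * ‖g‖) := by
        funext j; rw [if_neg (Nat.succ_ne_zero j), Nat.add_sub_cancel]
      rw [this]
      exact hzsum.mul_right _
    apply Summable.of_norm_bounded hgs
    intro j
    rw [hF3]; dsimp only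
    split_ifs with h
    · rw [norm_zero]
    · exact hbound _ _ (hWR _ (hα j)) _
  have h3eq : ∀ j, F3 (j + 1) = f3 j := by
    intro j
    rw [hF3, hf3]; dsimp only
    rw [if_neg (Nat.succ_ne_zero j), hww]; dsimp only
    simp only [Nat.add_sub_cancel]
  have h33 : ∑' i, f3 i = ∑' j, F3 j := by
    rw [Summable.tsum_eq_zero_add hsF3]
    have h0 : F3 0 = 0 := by rw [hF3]; dsimp only; rw [if_pos rfl]
    rw [h0, zero_add]
    exact (tsum_congr h3eq).symm
  -- combine
  have hzero : ∑' i, (f1 i + f2 i + f3 i) = 0 := by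
    rw [Summable.tsum_add (hs1.add hs2) hs3, Summable.tsum_add hs1 hs2, h11, h33]
    rw [← Summable.tsum_add hst1 hs2, ← Summable.tsum_add (hst1.add hs2) hsF3]
    have hterm : ∀ j, t1 j + f2 j + F3 j = 0 := by
      intro j
      have hrow := rows j
      rw [ht1, hf2, hF3]; dsimp only
      by_cases h : j = 0
      · subst h
        rw [if_pos rfl]
        rw [if_pos rfl] at hrow
        calc zz (0 + 1) * (γ' 0 * G 0) + zz 0 * (β' 0 * G 0) + 0
            = G 0 * ((0 : ℂ) + β' 0 * zz 0 + γ' 0 * zz (0 + 1)) := by ring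
          _ = 0 := by rw [hrow]; ring
      · rw [if_neg h]
        rw [if_neg h] at hrow
        calc zz (j + 1) * (γ' j * G j) + zz j * (β' j * G j) + zz (j - 1) * (α' j * G j)
            = G j * (α' j * zz (j - 1) + β' j * zz j + γ' j * zz (j + 1)) := by ring
          _ = 0 := by rw [hrow]; ring
    calc ∑' j, (t1 j + f2 j + F3 j) = ∑' _ : ℕ, (0 : ℂ) := tsum_congr hterm
      _ = 0 := tsum_zero
  rw [htot] at hzero
  exact hz0 hzero

set_option maxHeartbeats 1000000 in
/-- The core periodic construction: given a singular tridiagonal "block" with right kernel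
vector `X` and transposed kernel vector `Z` (both supported and nonvanishing on `[0,m)`),
produce periodic diagonals and a quasi-periodic kernel sequence. -/
lemma core (A B C : Set ℂ) (m : ℕ) (hm : 0 < m) (S D T X Z : ℕ → ℂ)
    (hS : ∀ i, S i ∈ A) (hD : ∀ i, D i ∈ B) (hT : ∀ i, T i ∈ C)
    (hX0 : ∀ i, m ≤ i → X i = 0) (hZ0 : ∀ i, m ≤ i → Z i = 0)
    (hXne : ∀ i, i < m → X i ≠ 0) (hZne : ∀ i, i < m → Z i ≠ 0)
    (rowsX : ∀ i, i < m →
      (if i = 0 then (0:ℂ) else S i * X (i-1)) + D i * X i + T i * X (i+1) = 0)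
    (rowsZ : ∀ j, j < m →
      (if j = 0 then (0:ℂ) else T (j-1) * Z (j-1)) + D j * Z j + S (j+1) * Z (j+1) = 0)
    (a c : ℂ) (ha : a ∈ A) (hc : c ∈ C) (hc0 : c ≠ 0 ∨ a = 0) :
    ∃ (α β γ y : ℕ → ℂ) (ρ : ℂ),
      (∀ i, α i ∈ A) ∧ (∀ i, β i ∈ B) ∧ (∀ i, γ i ∈ C) ∧
      (∀ i, (if i = 0 then (0:ℂ) else α i * y (i-1)) + β i * y i + γ i * y (i+1) = 0) ∧
      y 0 = X 0 ∧
      ρ * (c^2 * Z (m-1) * X 0) = a^2 * X (m-1) * Z 0 ∧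
      (a = 0 → ρ = 0) ∧
      ∃ Cb : ℝ, 0 ≤ Cb ∧ ∀ i, ‖y i‖ ≤ Cb * ‖ρ‖ ^ (i / (2*m+2)) := by
  classical
  set N : ℕ := 2*m+2 with hN
  have hNpos : 0 < N := by omega
  set e : ℂ := -(a * X (m-1)) / (c * Z (m-1)) with he
  set ρ : ℂ := -(a * (e * Z 0)) / (c * X 0) with hρ
  have ha0e : a = 0 → e = 0 := by intro h; rw [he, h]; simp
  have ha0ρ : a = 0 → ρ = 0 := by intro h; rw [hρ, h]; simp
  have hZm : Z (m-1) ≠ 0 := hZne _ (by omega)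
  have hXta : X 0 ≠ 0 := hXne 0 hm
  -- junction identities
  have hj1 : a * X (m-1) + c * (e * Z (m-1)) = 0 := by
    rcases hc0 with hc0 | ha0
    · rw [he]
      field_simp
      ring
    · rw [ha0, ha0e ha0]; ring
  have hj2 : a * (e * Z 0) + c * (ρ * X 0) = 0 := by
    rcases hc0 with hc0 | ha0
    · rw [hρ]
      field_simp
      ring
    · rw [ha0, ha0ρ ha0]; ring
  have hρid : ρ * (c^2 * Z (m-1) * X 0) = a^2 * X (m-1) * Z 0 := by
    rcases hc0 with hc0 | ha0
    · rw [hρ, he]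
      field_simp
    · rw [ha0ρ ha0, ha0]; ring
  -- patterns
  set pα : ℕ → ℂ := fun r =>
    if 1 ≤ r ∧ r < m then S r else if m+2 ≤ r ∧ r ≤ 2*m then S (2*m+1-r) else a with hpα
  set pβ : ℕ → ℂ := fun r =>
    if r < m then D r else if m+1 ≤ r ∧ r ≤ 2*m then D (2*m-r) else D 0 with hpβ
  set pγ : ℕ → ℂ := fun r =>
    if r + 2 ≤ m then T r else if m+1 ≤ r ∧ r + 3 ≤ 2*m+2 then T (2*m-1-r) else c with hpγ
  set pY : ℕ → ℂ := fun r =>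
    if r < m then X r else if m+1 ≤ r ∧ r ≤ 2*m then e * Z (2*m-r) else 0 with hpY
  set α : ℕ → ℂ := fun i => pα (i % N) with hα
  set β : ℕ → ℂ := fun i => pβ (i % N) with hβ
  set γ : ℕ → ℂ := fun i => pγ (i % N) with hγ
  set y : ℕ → ℂ := fun i => ρ ^ (i / N) * pY (i % N) with hy
  -- pattern evaluations
  have hpY0 : pY 0 = X 0 := by rw [hpY]; dsimp only; rw [if_pos hm]
  have hpYX : ∀ r, r ≤ m → pY r = X r := by
    intro r hr
    rw [hpY]; dsimp only
    rcases lt_or_eq_of_le hr with h | h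
    · rw [if_pos h]
    · rw [if_neg (by omega), if_neg (by omega), hX0 r (by omega)]
  have hpYZ : ∀ r, m+1 ≤ r → r ≤ 2*m → pY r = e * Z (2*m - r) := by
    intro r h1 h2
    rw [hpY]; dsimp only
    rw [if_neg (by omega), if_pos ⟨h1, h2⟩]
  have hpYlast : pY (2*m+1) = 0 := by
    rw [hpY]; dsimp only
    rw [if_neg (by omega), if_neg (by omega)]
  -- quasi-periodicity
  have hylt : ∀ i, i < N → y i = pY i := by
    intro i hi
    rw [hy]; dsimp only
    rw [Nat.div_eq_of_lt hi, Nat.mod_eq_of_lt hi, pow_zero, one_mul]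
  have hyper : ∀ i, y (i + N) = ρ * y i := by
    intro i
    rw [hy]; dsimp only
    rw [Nat.add_div_right i hNpos, Nat.add_mod_right, pow_succ]
    ring
  -- ranges
  have hαA : ∀ i, α i ∈ A := by
    intro i; rw [hα, hpα]; dsimp only
    split_ifs
    · exact hS _
    · exact hS _
    · exact ha
  have hβB : ∀ i, β i ∈ B := by
    intro i; rw [hβ, hpβ]; dsimp only
    split_ifs
    · exact hD _
    · exact hD _
    · exact hD _
  have hγC : ∀ i, γ i ∈ C := by
    intro i; rw [hγ, hpγ]; dsimp only
    split_ifs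
    · exact hT _
    · exact hT _
    · exact hc
  -- evaluations of α β γ y below N
  have hαlt : ∀ i, i < N → α i = pα i := by
    intro i hi; rw [hα]; dsimp only; rw [Nat.mod_eq_of_lt hi]
  have hβlt : ∀ i, i < N → β i = pβ i := by
    intro i hi; rw [hβ]; dsimp only; rw [Nat.mod_eq_of_lt hi]
  have hγlt : ∀ i, i < N → γ i = pγ i := by
    intro i hi; rw [hγ]; dsimp only; rw [Nat.mod_eq_of_lt hi]
  -- the key finite verification
  have key : ∀ i, i < N →
      (if i = 0 then (0:ℂ) else α i * y (i-1)) + β i * y i + γ i * y (i+1) = 0 := by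
    intro i hi
    by_cases h0 : i < m
    · -- block F rows
      have hyi : y i = X i := by rw [hylt i hi]; exact hpYX i (by omega)
      have hyi1 : y (i+1) = X (i+1) := by
        rw [hylt (i+1) (by omega)]; exact hpYX (i+1) (by omega)
      have hβi : β i = D i := by
        rw [hβlt i hi, hpβ]; dsimp only; rw [if_pos h0]
      by_cases hi0 : i = 0
      · subst hi0
        rw [if_pos rfl]
        have hr := rowsX 0 hm
        rw [if_pos rfl] at hr
        by_cases h2 : 2 ≤ m
        · have hγ0 : γ 0 = T 0 := by
            rw [hγlt 0 hNpos, hpγ]; dsimp only; rw [if_pos (by omega)]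
          rw [hβi, hγ0, hyi, hyi1]
          linear_combination hr
        · -- m = 1
          have hm1 : m = 1 := by omega
          have hγ0 : γ 0 = c := by
            rw [hγlt 0 hNpos, hpγ]; dsimp only
            rw [if_neg (by omega), if_neg (by omega)]
          have hX1 : X 1 = 0 := hX0 1 (by omega)
          rw [hβi, hγ0, hyi, hyi1, hX1]
          rw [hX1] at hr
          linear_combination hr
      · -- 1 ≤ i < m
        have hyim : y (i-1) = X (i-1) := by
          rw [hylt (i-1) (by omega)]; exact hpYX (i-1) (by omega)
        have hαi : α i = S i := by
          rw [hαlt i hi, hpα]; dsimp only; rw [if_pos ⟨by omega, h0⟩]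
        have hr := rowsX i h0
        rw [if_neg hi0] at hr
        rw [if_neg hi0, hαi, hβi, hyi, hyi1, hyim]
        by_cases hi2 : i + 2 ≤ m
        · have hγi : γ i = T i := by
            rw [hγlt i hi, hpγ]; dsimp only; rw [if_pos hi2]
          rw [hγi]
          linear_combination hr
        · -- i = m - 1
          have hγi : γ i = c := by
            rw [hγlt i hi, hpγ]; dsimp only
            rw [if_neg hi2, if_neg (by omega)]
          have hXi1 : X (i+1) = 0 := hX0 (i+1) (by omega)
          rw [hγi, hXi1]
          rw [hXi1] at hr
          linear_combination hr
    · by_cases him : i = m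
      · -- junction 1 : i = m
        have hyim : y (i-1) = X (m-1) := by
          rw [hylt (i-1) (by omega)]
          have h1 : i - 1 = m - 1 := by omega
          rw [h1]; exact hpYX (m-1) (by omega)
        have hym : y i = 0 := by
          rw [hylt i hi, hpY]; dsimp only
          rw [if_neg (by omega), if_neg (by omega)]
        have hym1 : y (i+1) = e * Z (m-1) := by
          rw [hylt (i+1) (by omega), hpYZ (i+1) (by omega) (by omega)]
          congr 2
          omega
        have hαm : α i = a := by
          rw [hαlt i hi, hpα]; dsimp only
          rw [if_neg (by omega), if_neg (by omega)]
        have hγm : γ i = c := by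
          rw [hγlt i hi, hpγ]; dsimp only
          rw [if_neg (by omega), if_neg (by omega)]
        rw [if_neg (by omega), hαm, hγm, hym, hym1, hyim]
        linear_combination hj1
      · by_cases hil : i = 2*m+1
        · -- junction 2 : i = 2m+1
          have hy2m : y (i-1) = e * Z 0 := by
            rw [hylt (i-1) (by omega), hpYZ (i-1) (by omega) (by omega)]
            congr 2
            omega
          have hyi : y i = 0 := by
            rw [hylt i hi]
            rw [hil, hpYlast]
          have hyN : y (i+1) = ρ * X 0 := by
            have h1 : i+1 = 0 + N := by omega
            rw [h1, hyper 0, hylt 0 hNpos, hpY0]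
          have hαi : α i = a := by
            rw [hαlt i hi, hpα]; dsimp only
            rw [if_neg (by omega), if_neg (by omega)]
          have hγi : γ i = c := by
            rw [hγlt i hi, hpγ]; dsimp only
            rw [if_neg (by omega), if_neg (by omega)]
          rw [if_neg (by omega), hαi, hγi, hy2m, hyi, hyN]
          linear_combination hj2
        · -- reversed transposed block rows : m+1 ≤ i ≤ 2m
          have hge : m+1 ≤ i := by omega
          have hle : i ≤ 2*m := by omega
          set q : ℕ := 2*m - i with hq
          have hqm : q < m := by omega
          have ht2 : β i * y i = e * (D q * Z q) := by
            have h1 : β i = D q := by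
              rw [hβlt i hi, hpβ]; dsimp only
              rw [if_neg (by omega), if_pos ⟨hge, hle⟩]
            have h2 : y i = e * Z q := by
              rw [hylt i hi, hpYZ i hge hle]
            rw [h1, h2]; ring
          have ht1 : α i * y (i-1) = e * (S (q+1) * Z (q+1)) := by
            by_cases him1 : i = m+1
            · have h1 : y (i-1) = 0 := by
                rw [hylt (i-1) (by omega)]
                have : i - 1 = m := by omega
                rw [this, hpY]; dsimp only
                rw [if_neg (by omega), if_neg (by omega)]
              have h2 : Z (q+1) = 0 := by
                apply hZ0
                omega
              rw [h1, h2]; ring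
            · have h1 : α i = S (q+1) := by
                rw [hαlt i hi, hpα]; dsimp only
                rw [if_neg (by omega), if_pos ⟨by omega, by omega⟩]
                congr 1
                omega
              have h2 : y (i-1) = e * Z (q+1) := by
                rw [hylt (i-1) (by omega), hpYZ (i-1) (by omega) (by omega)]
                congr 2
                omega
              rw [h1, h2]; ring
          have ht3 : γ i * y (i+1) = e * (if q = 0 then (0:ℂ) else T (q-1) * Z (q-1)) := by
            by_cases hi2m : i = 2*m
            · have h1 : y (i+1) = 0 := by
                rw [hylt (i+1) (by omega)]
                have : i + 1 = 2*m+1 := by omega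
                rw [this, hpYlast]
              have h2 : q = 0 := by omega
              rw [h1, h2]; simp
            · have h1 : γ i = T (q-1) := by
                rw [hγlt i hi, hpγ]; dsimp only
                rw [if_neg (by omega), if_pos ⟨by omega, by omega⟩]
                congr 1
                omega
              have hidx : 2*m - (i+1) = q - 1 := by omega
              have h2 : y (i+1) = e * Z (q-1) := by
                rw [hylt (i+1) (by omega), hpYZ (i+1) (by omega) (by omega), hidx]
              have h3 : q ≠ 0 := by omega
              rw [h1, h2, if_neg h3]; ring
          rw [if_neg (by omega), ht1, ht2, ht3]
          linear_combination e * (rowsZ q hqm)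
  -- all rows
  have rows : ∀ i, (if i = 0 then (0:ℂ) else α i * y (i-1)) + β i * y i + γ i * y (i+1) = 0 := by
    intro i
    induction i using Nat.strong_induction_on with
    | _ i IH =>
      rcases lt_or_ge i N with h | h
      · exact key i h
      · obtain ⟨j, rfl⟩ : ∃ j, i = j + N := ⟨i - N, by omega⟩
        have hαp : α (j + N) = α j := by
          rw [hα]; dsimp only; rw [Nat.add_mod_right]
        have hβp : β (j + N) = β j := by
          rw [hβ]; dsimp only; rw [Nat.add_mod_right]
        have hγp : γ (j + N) = γ j := by
          rw [hγ]; dsimp only; rw [Nat.add_mod_right]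
        have hyj : y (j + N) = ρ * y j := hyper j
        have hyj1 : y (j + N + 1) = ρ * y (j+1) := by
          have h1 : j + N + 1 = (j+1) + N := by omega
          rw [h1, hyper (j+1)]
        rcases Nat.eq_zero_or_pos j with rfl | hj
        · have hprev := key 0 hNpos
          rw [if_pos rfl] at hprev
          have hy1 : y (0 + N - 1) = 0 := by
            have h1 : 0 + N - 1 = 2*m+1 := by omega
            rw [h1, hylt (2*m+1) (by omega), hpYlast]
          rw [if_neg (by omega), hy1, mul_zero, hβp, hγp, hyj, hyj1]
          simp only [Nat.zero_add]
          linear_combination ρ * hprev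
        · have hprev := IH j (by omega)
          rw [if_neg (by omega)] at hprev
          have hyjm : y (j + N - 1) = ρ * y (j-1) := by
            have h1 : j + N - 1 = (j-1) + N := by omega
            rw [h1, hyper (j-1)]
          rw [if_neg (by omega), hαp, hβp, hγp, hyj, hyj1, hyjm]
          linear_combination ρ * hprev
  -- the bound
  set Cb : ℝ := ∑ r ∈ Finset.range N, ‖pY r‖ with hCb
  have hCb0 : 0 ≤ Cb := Finset.sum_nonneg (fun r _ => norm_nonneg _)
  have hbd : ∀ i, ‖y i‖ ≤ Cb * ‖ρ‖ ^ (i / (2*m+2)) := by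
    intro i
    have h1 : ‖y i‖ = ‖ρ‖ ^ (i / N) * ‖pY (i % N)‖ := by
      rw [hy]; dsimp only; rw [norm_mul, norm_pow]
    have h2 : ‖pY (i % N)‖ ≤ Cb := by
      rw [hCb]
      exact Finset.single_le_sum (fun r _ => norm_nonneg (pY r))
        (Finset.mem_range.2 (Nat.mod_lt i hNpos))
    calc ‖y i‖ = ‖ρ‖ ^ (i / N) * ‖pY (i % N)‖ := h1
      _ ≤ ‖ρ‖ ^ (i / N) * Cb := by
          apply mul_le_mul_of_nonneg_left h2 (pow_nonneg (norm_nonneg _) _)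
      _ = Cb * ‖ρ‖ ^ (i / (2*m+2)) := by rw [hN]; ring
  have hy0 : y 0 = X 0 := by rw [hylt 0 hNpos, hpY0]
  exact ⟨α, β, γ, y, ρ, hαA, hβB, hγC, rows, hy0, hρid, ha0ρ, Cb, hCb0, hbd⟩

set_option maxHeartbeats 1000000 in
/-- Reduction: from any nonzero finitely supported kernel sequence, extract one with
an interval support on which it never vanishes and whose relevant couplings are nonzero. -/
lemma red (U V W : Set ℂ) : ∀ m : ℕ, 0 < m → ∀ S D T X : ℕ → ℂ,
    (∀ i, S i ∈ U) → (∀ i, D i ∈ V) → (∀ i, T i ∈ W) →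
    (∀ i, m ≤ i → X i = 0) → (∃ i, X i ≠ 0) →
    (∀ i, i < m →
      (if i = 0 then (0:ℂ) else S i * X (i-1)) + D i * X i + T i * X (i+1) = 0) →
    ∃ (m' : ℕ) (S' D' T' X' : ℕ → ℂ), 0 < m' ∧
      (∀ i, S' i ∈ U) ∧ (∀ i, D' i ∈ V) ∧ (∀ i, T' i ∈ W) ∧
      (∀ i, m' ≤ i → X' i = 0) ∧ (∀ i, i < m' → X' i ≠ 0) ∧
      (∀ i, i < m' →
        (if i = 0 then (0:ℂ) else S' i * X' (i-1)) + D' i * X' i + T' i * X' (i+1) = 0) ∧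
      (∀ i, 1 ≤ i → i < m' → S' i ≠ 0) ∧ (∀ i, i + 2 ≤ m' → T' i ≠ 0) := by
  intro m
  induction m using Nat.strong_induction_on with
  | _ m IH =>
  intro hm S D T X hS hD hT hX0 hXex rows
  by_cases h1 : ∀ i, i < m → X i ≠ 0
  · by_cases h2 : ∀ i, 1 ≤ i → i < m → S i ≠ 0
    · by_cases h3 : ∀ i, i + 2 ≤ m → T i ≠ 0
      · exact ⟨m, S, D, T, X, hm, hS, hD, hT, hX0, h1, rows, h2, h3⟩
      · -- some interior superdiagonal entry vanishes: cut to the leading part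
        push_neg at h3
        obtain ⟨i, hi2, hTi⟩ := h3
        set X' : ℕ → ℂ := fun j => if j < i+1 then X j else 0 with hX'
        have e0 : ∀ j, j < i + 1 → X' j = X j := by
          intro j hj; rw [hX']; dsimp only; rw [if_pos hj]
        refine IH (i+1) (by omega) (by omega) S D T X' hS hD hT ?_ ?_ ?_
        · intro j hj; rw [hX']; dsimp only; rw [if_neg (by omega)]
        · exact ⟨0, by rw [e0 0 (by omega)]; exact h1 0 hm⟩
        · intro j hj
          have hr := rows j (by omega)
          have e1 : X' j = X j := e0 j hj
          have e2 : (if j = 0 then (0:ℂ) else S j * X' (j-1))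
              = (if j = 0 then (0:ℂ) else S j * X (j-1)) := by
            split_ifs with h
            · rfl
            · rw [e0 (j-1) (by omega)]
          by_cases hji : j = i
          · subst hji
            have e3 : X' (j+1) = 0 := by rw [hX']; dsimp only; rw [if_neg (by omega)]
            rw [e1, e2, e3, hTi]
            rw [hTi] at hr
            linear_combination hr
          · have e3 : X' (j+1) = X (j+1) := e0 (j+1) (by omega)
            rw [e1, e2, e3]
            exact hr
    · -- some interior subdiagonal entry vanishes: shift to the trailing part
      push_neg at h2
      obtain ⟨i, hi1, him, hSi⟩ := h2
      refine IH (m-i) (by omega) (by omega) (fun j => S (j+i)) (fun j => D (j+i))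
        (fun j => T (j+i)) (fun j => X (j+i)) (fun j => hS _) (fun j => hD _) (fun j => hT _)
        ?_ ?_ ?_
      · intro j hj; exact hX0 _ (by omega)
      · refine ⟨0, ?_⟩
        show X (0 + i) ≠ 0
        rw [Nat.zero_add]
        exact h1 i him
      · intro j hj
        by_cases hj0 : j = 0
        · subst hj0
          have hr := rows i him
          rw [if_neg (by omega)] at hr
          rw [if_pos rfl]
          show (0:ℂ) + D (0+i) * X (0+i) + T (0+i) * X (0+1+i) = 0
          rw [Nat.zero_add]
          have hidx : 0+1+i = i+1 := by omega
          rw [hidx]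
          rw [hSi] at hr
          linear_combination hr
        · have hr := rows (j+i) (by omega)
          rw [if_neg (by omega)] at hr
          rw [if_neg hj0]
          show S (j+i) * X (j-1+i) + D (j+i) * X (j+i) + T (j+i) * X (j+1+i) = 0
          have hidx1 : j-1+i = j+i-1 := by omega
          have hidx2 : j+1+i = j+i+1 := by omega
          rw [hidx1, hidx2]
          exact hr
  · -- the kernel vector vanishes somewhere below m
    push_neg at h1
    obtain ⟨i, him, hXi⟩ := h1
    by_cases hjlt : ∃ j, j < i ∧ X j ≠ 0
    · -- cut to the leading part [0, i)
      obtain ⟨j0, hj0i, hj0⟩ := hjlt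
      set X' : ℕ → ℂ := fun j => if j < i then X j else 0 with hX'
      have e0 : ∀ j, j < i → X' j = X j := by
        intro j hj; rw [hX']; dsimp only; rw [if_pos hj]
      refine IH i (by omega) (by omega) S D T X' hS hD hT ?_ ?_ ?_
      · intro j hj; rw [hX']; dsimp only; rw [if_neg (by omega)]
      · exact ⟨j0, by rw [e0 j0 hj0i]; exact hj0⟩
      · intro j hj
        have hr := rows j (by omega)
        have e1 : X' j = X j := e0 j hj
        have e2 : (if j = 0 then (0:ℂ) else S j * X' (j-1))
            = (if j = 0 then (0:ℂ) else S j * X (j-1)) := by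
          split_ifs with h
          · rfl
          · rw [e0 (j-1) (by omega)]
        have e3 : X' (j+1) = X (j+1) := by
          by_cases hji : j + 1 < i
          · exact e0 _ hji
          · have hji' : j + 1 = i := by omega
            rw [hX']; dsimp only
            rw [if_neg (by omega), hji', hXi]
        rw [e1, e2, e3]
        exact hr
    · -- the support lies entirely above i: shift by i+1
      push_neg at hjlt
      obtain ⟨j0, hj0⟩ := hXex
      have hij0 : i < j0 := by
        by_contra h
        rcases lt_or_eq_of_le (not_lt.mp h) with h' | h'
        · exact hj0 (hjlt j0 h')
        · exact hj0 (h' ▸ hXi)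
      have hj0m : j0 < m := by
        by_contra h
        exact hj0 (hX0 j0 (by omega))
      refine IH (m-(i+1)) (by omega) (by omega) (fun j => S (j+(i+1))) (fun j => D (j+(i+1)))
        (fun j => T (j+(i+1))) (fun j => X (j+(i+1))) (fun j => hS _) (fun j => hD _)
        (fun j => hT _) ?_ ?_ ?_
      · intro j hj; exact hX0 _ (by omega)
      · refine ⟨j0 - (i+1), ?_⟩
        show X (j0-(i+1)+(i+1)) ≠ 0
        have hidx : j0-(i+1)+(i+1) = j0 := by omega
        rw [hidx]
        exact hj0
      · intro j hj
        by_cases hj0' : j = 0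
        · subst hj0'
          have hr := rows (i+1) (by omega)
          rw [if_neg (by omega)] at hr
          have hidx0 : i + 1 - 1 = i := by omega
          rw [hidx0, hXi] at hr
          rw [if_pos rfl]
          show (0:ℂ) + D (0+(i+1)) * X (0+(i+1)) + T (0+(i+1)) * X (0+1+(i+1)) = 0
          rw [Nat.zero_add]
          have hidx : 0+1+(i+1) = (i+1)+1 := by omega
          rw [hidx]
          linear_combination hr
        · have hr := rows (j+(i+1)) (by omega)
          rw [if_neg (by omega)] at hr
          rw [if_neg hj0']
          show S (j+(i+1)) * X (j-1+(i+1)) + D (j+(i+1)) * X (j+(i+1))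
              + T (j+(i+1)) * X (j+1+(i+1)) = 0
          have hidx1 : j-1+(i+1) = j+(i+1)-1 := by omega
          have hidx2 : j+1+(i+1) = j+(i+1)+1 := by omega
          rw [hidx1, hidx2]
          exact hr

/-- The transposed kernel vector `Z i = P i * X i`. -/
lemma transposeKernel (m : ℕ) (hm : 0 < m) (S D T X : ℕ → ℂ)
    (hX0 : ∀ i, m ≤ i → X i = 0) (hXne : ∀ i, i < m → X i ≠ 0)
    (rowsX : ∀ i, i < m →
      (if i = 0 then (0:ℂ) else S i * X (i-1)) + D i * X i + T i * X (i+1) = 0)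
    (hSne : ∀ i, 1 ≤ i → i < m → S i ≠ 0) (hTne : ∀ i, i + 2 ≤ m → T i ≠ 0) :
    ∃ Z : ℕ → ℂ, Z 0 = X 0 ∧ (∀ i, m ≤ i → Z i = 0) ∧ (∀ i, i < m → Z i ≠ 0) ∧
      (∀ j, j < m →
        (if j = 0 then (0:ℂ) else T (j-1) * Z (j-1)) + D j * Z j + S (j+1) * Z (j+1) = 0) := by
  classical
  set P : ℕ → ℂ := fun n => Nat.rec (motive := fun _ => ℂ) 1
    (fun k acc => acc * T k / S (k+1)) n with hP
  have hP0 : P 0 = 1 := rfl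
  have hPs : ∀ k, P (k+1) = P k * T k / S (k+1) := fun k => rfl
  have hPne : ∀ k, k < m → P k ≠ 0 := by
    intro k
    induction k with
    | zero => intro _; rw [hP0]; exact one_ne_zero
    | succ k IHk =>
      intro hk
      rw [hPs]
      exact div_ne_zero (mul_ne_zero (IHk (by omega)) (hTne k (by omega)))
        (hSne (k+1) (by omega) hk)
  have hid1 : ∀ k, 1 ≤ k → k < m → T (k-1) * P (k-1) = P k * S k := by
    intro k hk1 hkm
    obtain ⟨j, rfl⟩ : ∃ j, k = j + 1 := ⟨k-1, by omega⟩
    have hidx : j + 1 - 1 = j := by omega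
    rw [hidx, hPs j, div_mul_cancel₀ _ (hSne (j+1) (by omega) hkm)]
    ring
  have hid2 : ∀ j, j + 2 ≤ m → S (j+1) * P (j+1) = P j * T j := by
    intro j hj
    rw [hPs j, mul_comm, div_mul_cancel₀ _ (hSne (j+1) (by omega) (by omega))]
  set Z : ℕ → ℂ := fun i => if i < m then P i * X i else 0 with hZ
  have hZlt : ∀ i, i < m → Z i = P i * X i := by
    intro i hi; rw [hZ]; dsimp only; rw [if_pos hi]
  refine ⟨Z, ?_, ?_, ?_, ?_⟩
  · rw [hZlt 0 hm, hP0, one_mul]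
  · intro i hi; rw [hZ]; dsimp only; rw [if_neg (by omega)]
  · intro i hi; rw [hZlt i hi]; exact mul_ne_zero (hPne i hi) (hXne i hi)
  · intro j hj
    have hr := rowsX j hj
    by_cases hj0 : j = 0
    · subst hj0
      rw [if_pos rfl] at hr ⊢
      simp only [Nat.zero_add] at hr ⊢
      rw [hZlt 0 hm, hP0]
      by_cases h1m : 1 < m
      · rw [hZlt 1 h1m]
        have h2 := hid2 0 (by omega)
        rw [hP0] at h2
        simp only [Nat.zero_add] at h2
        linear_combination hr + X 1 * h2
      · have hX1 : X 1 = 0 := hX0 1 (by omega)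
        have hZ1 : Z 1 = 0 := by rw [hZ]; dsimp only; rw [if_neg (by omega)]
        rw [hZ1]
        rw [hX1] at hr
        linear_combination hr
    · rw [if_neg hj0] at hr ⊢
      rw [hZlt (j-1) (by omega), hZlt j hj]
      have h1 := hid1 j (by omega) hj
      by_cases hjm : j + 1 < m
      · rw [hZlt (j+1) hjm]
        have h2 := hid2 j (by omega)
        linear_combination P j * hr + (X (j-1)) * h1 + (X (j+1)) * h2
      · have hXj1 : X (j+1) = 0 := hX0 (j+1) (by omega)
        have hZj1 : Z (j+1) = 0 := by rw [hZ]; dsimp only; rw [if_neg (by omega)]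
        rw [hZj1]
        rw [hXj1] at hr
        linear_combination P j * hr + (X (j-1)) * h1

set_option maxHeartbeats 1000000 in
lemma finToNat (U V W : Set ℂ) (n : ℕ) (hn : 0 < n) (u v w : Fin n → ℂ)
    (hu : ∀ i, u i ∈ U) (hv : ∀ i, v i ∈ V) (hw : ∀ i, w i ∈ W)
    (u₀ v₀ w₀ : ℂ) (hu₀ : u₀ ∈ U) (hv₀ : v₀ ∈ V) (hw₀ : w₀ ∈ W)
    (x : Fin n → ℂ) (hx : x ≠ 0) (hker : (JacobiMatrix u v w).mulVec x = 0) :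
    ∃ S D T X : ℕ → ℂ, (∀ i, S i ∈ U) ∧ (∀ i, D i ∈ V) ∧ (∀ i, T i ∈ W) ∧
      (∀ i, n ≤ i → X i = 0) ∧ (∃ i, X i ≠ 0) ∧
      (∀ i, i < n →
        (if i = 0 then (0:ℂ) else S i * X (i-1)) + D i * X i + T i * X (i+1) = 0) := by
  classical
  set S : ℕ → ℂ := fun i => if h : i < n then u ⟨i, h⟩ else u₀ with hS
  set D : ℕ → ℂ := fun i => if h : i < n then v ⟨i, h⟩ else v₀ with hD
  set T : ℕ → ℂ := fun i => if h : i < n then w ⟨i, h⟩ else w₀ with hT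
  set X : ℕ → ℂ := fun i => if h : i < n then x ⟨i, h⟩ else 0 with hX
  have hSU : ∀ i, S i ∈ U := by
    intro i
    rw [hS]; dsimp only
    split_ifs with h
    · exact hu _
    · exact hu₀
  have hDV : ∀ i, D i ∈ V := by
    intro i
    rw [hD]; dsimp only
    split_ifs with h
    · exact hv _
    · exact hv₀
  have hTW : ∀ i, T i ∈ W := by
    intro i
    rw [hT]; dsimp only
    split_ifs with h
    · exact hw _
    · exact hw₀
  have hX0 : ∀ i, n ≤ i → X i = 0 := by
    intro i hi; rw [hX]; dsimp only; rw [dif_neg (by omega)]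
  have hXex : ∃ i, X i ≠ 0 := by
    have : ∃ k : Fin n, x k ≠ 0 := by
      by_contra h
      push_neg at h
      exact hx (funext fun k => h k)
    obtain ⟨k, hk⟩ := this
    refine ⟨(k : ℕ), ?_⟩
    rw [hX]; dsimp only
    rw [dif_pos k.isLt]
    simpa using hk
  refine ⟨S, D, T, X, hSU, hDV, hTW, hX0, hXex, ?_⟩
  intro i hi
  set k : Fin n := ⟨i, hi⟩ with hk
  have hkk : (k : ℕ) = i := rfl
  have hrow : (JacobiMatrix u v w).mulVec x k = 0 := by rw [hker]; rfl
  have hexp : (JacobiMatrix u v w).mulVec x k =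
      (if i = 0 then (0:ℂ) else S i * X (i-1)) + D i * X i + T i * X (i+1) := by
    have h0 : (JacobiMatrix u v w).mulVec x k = ∑ j : Fin n, JacobiMatrix u v w k j * x j := rfl
    have hsplit : ∀ j : Fin n, JacobiMatrix u v w k j * x j =
        (if (k:ℕ) = (j:ℕ)+1 then S i * x j else 0)
        + (if k = j then D i * x j else 0)
        + (if (j:ℕ) = (k:ℕ)+1 then T i * x j else 0) := by
      intro j
      have hSk : S i = u k := by
        rw [hS]; dsimp only; rw [dif_pos hi]
      have hDk : D i = v k := by
        rw [hD]; dsimp only; rw [dif_pos hi]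
      have hTk : T i = w k := by
        rw [hT]; dsimp only; rw [dif_pos hi]
      have hkval : (k:ℕ) = i := rfl
      show (if ((k : ℕ) : ℤ) = ((j : ℕ) : ℤ) + 1 then u k
          else if k = j then v k
          else if ((j : ℕ) : ℤ) = ((k : ℕ) : ℤ) + 1 then w k
          else 0) * x j = _
      by_cases h1 : ((k : ℕ) : ℤ) = ((j : ℕ) : ℤ) + 1
      · rw [if_pos h1, if_pos (by omega : (k:ℕ) = (j:ℕ)+1),
          if_neg (by intro h; rw [h] at h1; omega),
          if_neg (by omega : ¬ (j:ℕ) = (k:ℕ)+1), hSk]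
        ring
      · rw [if_neg h1]
        by_cases h2 : k = j
        · rw [if_pos h2, if_neg (by rw [h2] at h1 ⊢; omega), if_pos h2,
            if_neg (by rw [h2] at h1 ⊢; omega), hDk]
          ring
        · rw [if_neg h2]
          have h2' : (k:ℕ) ≠ (j:ℕ) := fun h => h2 (Fin.ext h)
          by_cases h3 : ((j : ℕ) : ℤ) = ((k : ℕ) : ℤ) + 1
          · rw [if_pos h3, if_neg (by omega : ¬ (k:ℕ) = (j:ℕ)+1), if_neg h2,
              if_pos (by omega : (j:ℕ) = (k:ℕ)+1), hTk]
            ring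
          · rw [if_neg h3, if_neg (by omega : ¬ (k:ℕ) = (j:ℕ)+1), if_neg h2,
              if_neg (by omega : ¬ (j:ℕ) = (k:ℕ)+1)]
            ring
    rw [h0]
    calc ∑ j : Fin n, JacobiMatrix u v w k j * x j
        = ∑ j : Fin n, ((if (k:ℕ) = (j:ℕ)+1 then S i * x j else 0)
          + (if k = j then D i * x j else 0)
          + (if (j:ℕ) = (k:ℕ)+1 then T i * x j else 0)) := Finset.sum_congr rfl
            (fun j _ => hsplit j)
      _ = (∑ j : Fin n, if (k:ℕ) = (j:ℕ)+1 then S i * x j else 0)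
          + (∑ j : Fin n, if k = j then D i * x j else 0)
          + (∑ j : Fin n, if (j:ℕ) = (k:ℕ)+1 then T i * x j else 0) := by
            rw [Finset.sum_add_distrib, Finset.sum_add_distrib]
      _ = (if i = 0 then (0:ℂ) else S i * X (i-1)) + D i * X i + T i * X (i+1) := by
            congr 1
            · congr 1
              · -- subdiagonal sum
                by_cases hk0 : i = 0
                · rw [if_pos hk0]
                  apply Finset.sum_eq_zero
                  intro j _
                  rw [if_neg (by omega : ¬ (k:ℕ) = (j:ℕ)+1)]
                · rw [if_neg hk0]
                  have hjm : i - 1 < n := by omega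
                  rw [Finset.sum_eq_single (⟨i-1, hjm⟩ : Fin n)]
                  · rw [if_pos (show (k:ℕ) = ((⟨i-1, hjm⟩ : Fin n):ℕ)+1 by
                      show (k:ℕ) = (i-1)+1
                      omega)]
                    have : X (i-1) = x ⟨i-1, hjm⟩ := by
                      rw [hX]; dsimp only; rw [dif_pos hjm]
                    rw [this]
                  · intro j _ hj
                    rw [if_neg]
                    intro h
                    apply hj
                    apply Fin.ext
                    show (j:ℕ) = i - 1
                    omega
                  · intro h
                    exact absurd (Finset.mem_univ _) h
              · -- diagonal sum
                rw [Finset.sum_ite_eq Finset.univ k (fun j => D i * x j),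
                  if_pos (Finset.mem_univ k)]
                have : X i = x k := by
                  rw [hX]; dsimp only; rw [dif_pos hi]
                rw [this]
            · -- superdiagonal sum
              by_cases hk1 : i + 1 < n
              · rw [Finset.sum_eq_single (⟨i+1, hk1⟩ : Fin n)]
                · rw [if_pos (show ((⟨i+1, hk1⟩ : Fin n):ℕ) = (k:ℕ)+1 by
                    show i+1 = (k:ℕ)+1
                    omega)]
                  have : X (i+1) = x ⟨i+1, hk1⟩ := by
                    rw [hX]; dsimp only; rw [dif_pos hk1]
                  rw [this]
                · intro j _ hj
                  rw [if_neg]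
                  intro h
                  apply hj
                  apply Fin.ext
                  show (j:ℕ) = i + 1
                  omega
                · intro h
                  exact absurd (Finset.mem_univ _) h
              · have hzero : ∑ j : Fin n, (if (j:ℕ) = (k:ℕ)+1 then T i * x j else 0) = 0 := by
                  apply Finset.sum_eq_zero
                  intro j _
                  rw [if_neg]
                  have := j.isLt
                  omega
                rw [hzero]
                have : X (i+1) = 0 := by
                  rw [hX]; dsimp only; rw [dif_neg (by omega)]
                rw [this, mul_zero]
  rw [hexp] at hrow
  exact hrow


end St6

end St6Aux

/-- If all operators in `M₊(U,V,W)` are invertible then every finite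
tridiagonal matrix over `(U,V,W)` is invertible. -/
theorem statement6 (U V W : Set ℂ)
    (hUne : U.Nonempty) (hUc : IsCompact U) (hVne : V.Nonempty) (hVc : IsCompact V)
    (hWne : W.Nonempty) (hWc : IsCompact W)
    (hinv : AllMPlusInv U V W) :
    ∀ (n : ℕ) (u v w : Fin n → ℂ), RangesIn U V W u v w →
      IsUnit (JacobiMatrix u v w) := by
  intro n u v w hr
  by_contra hnu
  obtain ⟨hu, hv, hw⟩ := hr
  obtain ⟨u₀, hu₀⟩ := hUne
  obtain ⟨v₀, hv₀⟩ := hVne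
  obtain ⟨w₀, hw₀⟩ := hWne
  rcases Nat.eq_zero_or_pos n with rfl | hn
  · exact hnu ((Matrix.isUnit_iff_isUnit_det _).2
      (by rw [Matrix.det_fin_zero]; exact isUnit_one))
  have hdet : (JacobiMatrix u v w).det = 0 := by
    by_contra hd
    exact hnu ((Matrix.isUnit_iff_isUnit_det _).2 (isUnit_iff_ne_zero.2 hd))
  obtain ⟨x, hx0, hxker⟩ := Matrix.exists_mulVec_eq_zero_iff.2 hdet
  obtain ⟨S0, D0, T0, X0, hS0, hD0, hT0, hX00, hX0ex, rows0⟩ :=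
    St6.finToNat U V W n hn u v w hu hv hw u₀ v₀ w₀ hu₀ hv₀ hw₀ x hx0 hxker
  obtain ⟨m, S, D, T, X, hm, hS, hD, hT, hXz, hXne, rows, hSne, hTne⟩ :=
    St6.red U V W n hn S0 D0 T0 X0 hS0 hD0 hT0 hX00 hX0ex rows0
  obtain ⟨Z, hZ0eq, hZz, hZne, rowsZ⟩ :=
    St6.transposeKernel m hm S D T X hXz hXne rows hSne hTne
  have hX0ne : X 0 ≠ 0 := hXne 0 hm
  have hZ0ne : Z 0 ≠ 0 := hZne 0 hm
  set S' : ℕ → ℂ := fun j => T (j-1) with hS'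
  set T' : ℕ → ℂ := fun j => S (j+1) with hT'
  have hS'W : ∀ i, S' i ∈ W := fun i => hT _
  have hT'U : ∀ i, T' i ∈ U := fun i => hS _
  have rowsX' : ∀ j, j < m →
      (if j = 0 then (0:ℂ) else S' j * Z (j-1)) + D j * Z j + T' j * Z (j+1) = 0 := by
    intro j hj
    exact rowsZ j hj
  have rowsZ' : ∀ j, j < m →
      (if j = 0 then (0:ℂ) else T' (j-1) * X (j-1)) + D j * X j + S' (j+1) * X (j+1) = 0 := by
    intro j hj
    have h := rows j hj
    by_cases hj0 : j = 0
    · subst hj0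
      rw [if_pos rfl] at h ⊢
      exact h
    · rw [if_neg hj0] at h ⊢
      have e1 : T' (j-1) = S j := by
        rw [hT']; dsimp only
        congr 1
        omega
      have e2 : S' (j+1) = T j := by
        rw [hS']; dsimp only
        congr 1
      rw [e1, e2]
      exact h
  by_cases h0U : (0:ℂ) ∈ U
  · obtain ⟨α, β, γ, y, ρ, hαA, hβB, hγC, rows1, hy0, _, ha0ρ, Cb, hCb0, hbd⟩ :=
      St6.core U V W m hm S D T X Z hS hD hT hXz hZz hXne hZne rows rowsZ 0 w₀ h0U hw₀
        (Or.inr rfl)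
    have hbd' : ∀ i, ‖y i‖ ≤ Cb := by
      intro i
      calc ‖y i‖ ≤ Cb * ‖ρ‖ ^ (i / (2*m+2)) := hbd i
        _ ≤ Cb * 1 := mul_le_mul_of_nonneg_left
            (pow_le_one₀ (norm_nonneg _) (by rw [ha0ρ rfl]; simp)) hCb0
        _ = Cb := mul_one Cb
    exact St6.noninj U V W hUc hVc hWc hinv α β γ y hαA hβB hγC rows1 Cb hbd' 0
      (by rw [hy0]; exact hX0ne)
  · by_cases h0W : (0:ℂ) ∈ W
    · obtain ⟨α', β', γ', z, ρ', hαW, hβV, hγU, rows2, hz0, _, ha0ρ', Cb, hCb0, hbd⟩ :=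
        St6.core W V U m hm S' D T' Z X hS'W hD hT'U hZz hXz hZne hXne rowsX' rowsZ' 0 u₀
          h0W hu₀ (Or.inr rfl)
      have hsum : Summable (fun i => ‖z i‖) :=
        St6.summable_of_quasi_geom z Cb ‖ρ'‖ hCb0 (norm_nonneg _)
          (by rw [ha0ρ' rfl]; simp) (2*m+2) (by omega) hbd
      exact St6.nonsurj U V W hUc hVc hWc hinv u₀ hu₀ α' β' γ' z hαW hβV hγU rows2 hsum
        (by rw [hz0, hZ0eq]; exact hX0ne)
    · have hu0ne : u₀ ≠ 0 := fun h => h0U (h ▸ hu₀)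
      have hw0ne : w₀ ≠ 0 := fun h => h0W (h ▸ hw₀)
      obtain ⟨α, β, γ, y, ρ, hαA, hβB, hγC, rows1, hy0, hρid, _, Cb, hCb0, hbd⟩ :=
        St6.core U V W m hm S D T X Z hS hD hT hXz hZz hXne hZne rows rowsZ u₀ w₀ hu₀ hw₀
          (Or.inl hw0ne)
      rcases le_or_gt ‖ρ‖ 1 with hρ1 | hρ1
      · have hbd' : ∀ i, ‖y i‖ ≤ Cb := by
          intro i
          calc ‖y i‖ ≤ Cb * ‖ρ‖ ^ (i / (2*m+2)) := hbd i
            _ ≤ Cb * 1 := mul_le_mul_of_nonneg_left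
                (pow_le_one₀ (norm_nonneg _) hρ1) hCb0
            _ = Cb := mul_one Cb
        exact St6.noninj U V W hUc hVc hWc hinv α β γ y hαA hβB hγC rows1 Cb hbd' 0
          (by rw [hy0]; exact hX0ne)
      · obtain ⟨α', β', γ', z, ρ', hαW, hβV, hγU, rows2, hz0, hρ'id, _, Cb', hCb0', hbd'⟩ :=
          St6.core W V U m hm S' D T' Z X hS'W hD hT'U hZz hXz hZne hXne rowsX' rowsZ' w₀ u₀
            hw₀ hu₀ (Or.inl hu0ne)
        have hXm : X (m-1) ≠ 0 := hXne _ (by omega)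
        have hZm : Z (m-1) ≠ 0 := hZne _ (by omega)
        have hK : u₀^2 * X (m-1) * Z 0 ≠ 0 :=
          mul_ne_zero (mul_ne_zero (pow_ne_zero 2 hu0ne) hXm) hZ0ne
        have hρρ' : ρ * ρ' = 1 := by
          apply mul_right_cancel₀ hK
          calc (ρ * ρ') * (u₀^2 * X (m-1) * Z 0) = ρ * (ρ' * (u₀^2 * X (m-1) * Z 0)) := by ring
            _ = ρ * (w₀^2 * Z (m-1) * X 0) := by rw [hρ'id]
            _ = u₀^2 * X (m-1) * Z 0 := hρid
            _ = 1 * (u₀^2 * X (m-1) * Z 0) := (one_mul _).symm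
        have hnorm : ‖ρ‖ * ‖ρ'‖ = 1 := by rw [← norm_mul, hρρ', norm_one]
        have hρ'lt : ‖ρ'‖ < 1 := by nlinarith [norm_nonneg ρ', norm_nonneg ρ]
        have hsum : Summable (fun i => ‖z i‖) :=
          St6.summable_of_quasi_geom z Cb' ‖ρ'‖ hCb0' (norm_nonneg _) hρ'lt (2*m+2)
            (by omega) hbd'
        exact St6.nonsurj U V W hUc hVc hWc hinv u₀ hu₀ α' β' γ' z hαW hβV hγU rows2 hsum
          (by rw [hz0, hZ0eq]; exact hX0ne)
end

section
/- Let U, V, W be nonempty compact subsets of ℂ, let p ∈ [1,∞], let A ∈ PE(U,V,W) and let B ∈ M(U,V,W) be arbitrary. Then ‖A‖_p ≥ ‖B‖_p. If moreover (U,V,W) is compatible, then A and B are invertible and ‖A⁻¹‖_p ≥ ‖B⁻¹‖_p. -/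
open scoped ENNReal

noncomputable section Aux

variable {p : ℝ≥0∞} [Fact (1 ≤ p)]

lemma p_ne_zero : p ≠ 0 := by
  have h : (1:ℝ≥0∞) ≤ p := Fact.out
  exact fun h0 => by simp [h0] at h

lemma memℓp_shiftZ (f : ℤ → ℂ) (hf : Memℓp f p) (t : ℤ) :
    Memℓp (fun i => f (i - t)) p := by
  rcases p.trichotomy with rfl | rfl | hp
  · refine memℓp_zero ?_
    have := (memℓp_zero_iff.mp hf)
    have : Set.Finite ((fun i : ℤ => i + t) '' {i | f i ≠ 0}) := this.image _
    refine this.subset ?_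
    intro i hi
    exact ⟨i - t, hi, by ring⟩
  · refine memℓp_infty ?_
    have := memℓp_infty_iff.mp hf
    have hr : (Set.range fun i : ℤ => ‖f (i - t)‖) = Set.range fun i : ℤ => ‖f i‖ := by
      have : (fun i : ℤ => ‖f (i - t)‖) = (fun i : ℤ => ‖f i‖) ∘ (Equiv.subRight t) := rfl
      rw [this, (Equiv.subRight t).surjective.range_comp]
    rwa [hr]
  · have hp0 : 0 < p.toReal := by linarith
    refine memℓp_gen ?_
    have hs := hf.summable hp0
    exact ((Equiv.subRight t).summable_iff (f := fun i : ℤ => ‖f i‖ ^ p.toReal)).mpr hs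

/-- shift: `(shl t x) i = x (i - t)`. -/
def shl (t : ℤ) (x : SeqZ p) : SeqZ p := ⟨fun i => x (i - t), memℓp_shiftZ _ (lp.memℓp x) t⟩

@[simp] lemma shl_apply (t : ℤ) (x : SeqZ p) (i : ℤ) : (shl t x : ℤ → ℂ) i = x (i - t) := rfl

lemma norm_shl (t : ℤ) (x : SeqZ p) : ‖shl t x‖ = ‖x‖ := by
  rcases p.dichotomy with rfl | hp
  · rw [lp.norm_eq_ciSup, lp.norm_eq_ciSup]
    have : (fun i : ℤ => ‖(shl (p := ⊤) t x : ℤ → ℂ) i‖)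
        = (fun i : ℤ => ‖x i‖) ∘ (Equiv.subRight t) := rfl
    rw [iSup, iSup, this, (Equiv.subRight t).surjective.range_comp]
  · have hp0 : 0 < p.toReal := by linarith
    rw [lp.norm_eq_tsum_rpow hp0, lp.norm_eq_tsum_rpow hp0]
    congr 1
    exact (Equiv.subRight t).tsum_eq (f := fun i : ℤ => ‖x i‖ ^ p.toReal)


/-- finitely supported element of `ℓᵖ(ℤ)`. -/
def finVec (p : ℝ≥0∞) [Fact (1 ≤ p)] (s : Finset ℤ) (g : ℤ → ℂ) : SeqZ p :=
  ∑ i ∈ s, lp.single p i (g i)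

lemma finVec_apply (s : Finset ℤ) (g : ℤ → ℂ) (j : ℤ) :
    (finVec p s g : ℤ → ℂ) j = if j ∈ s then g j else 0 := by
  rw [finVec, lp.coeFn_sum, Finset.sum_apply]
  have : ∀ i ∈ s, (lp.single p i (g i) : ℤ → ℂ) j = if i = j then g j else 0 := by
    intro i _
    rcases eq_or_ne j i with rfl | hne
    · simp [lp.single_apply_self]
    · rw [lp.single_apply_ne p i _ hne, if_neg (Ne.symm hne)]
  rw [Finset.sum_congr rfl this, Finset.sum_ite_eq' s j fun _ => g j]

lemma norm_single_le (i : ℤ) (a : ℂ) : ‖(lp.single p i a : SeqZ p)‖ ≤ ‖a‖ := by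
  rcases p.dichotomy with rfl | hp
  · refine lp.norm_le_of_forall_le (norm_nonneg a) ?_
    intro j
    rcases eq_or_ne j i with rfl | hne
    · rw [lp.single_apply_self]
    · rw [lp.single_apply_ne _ i _ hne]; simp
  · have hp0 : 0 < p.toReal := by linarith
    rw [lp.norm_single (E := fun _ : ℤ => ℂ) (pos_iff_ne_zero.mpr p_ne_zero) i a]

lemma norm_le_sum_of_support (f : SeqZ p) (s : Finset ℤ) (h : ∀ i ∉ s, (f : ℤ → ℂ) i = 0) :
    ‖f‖ ≤ ∑ i ∈ s, ‖(f : ℤ → ℂ) i‖ := by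
  have hf : f = finVec p s (⇑f) := by
    apply lp.ext
    funext j
    rw [finVec_apply]
    by_cases hj : j ∈ s
    · rw [if_pos hj]
    · rw [if_neg hj, h j hj]
  calc ‖f‖ = ‖finVec p s (⇑f)‖ := by rw [← hf]
  _ ≤ ∑ i ∈ s, ‖(lp.single p i ((f : ℤ → ℂ) i) : SeqZ p)‖ := norm_sum_le _ _
  _ ≤ ∑ i ∈ s, ‖(f : ℤ → ℂ) i‖ := Finset.sum_le_sum fun i _ => norm_single_le i _

lemma norm_finVec_coe_le (s : Finset ℤ) (x : SeqZ p) : ‖finVec p s ⇑x‖ ≤ ‖x‖ := by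
  rcases p.dichotomy with rfl | hp
  · refine lp.norm_le_of_forall_le (norm_nonneg x) ?_
    intro j
    rw [finVec_apply]
    split
    · exact lp.norm_apply_le_norm ENNReal.top_ne_zero x j
    · rw [norm_zero]; exact norm_nonneg x
  · have hp0 : 0 < p.toReal := by linarith
    have h1 : ‖finVec p s ⇑x‖ ^ p.toReal = ∑ i ∈ s, ‖(x : ℤ → ℂ) i‖ ^ p.toReal :=
      lp.norm_sum_single hp0 (⇑x) s
    have h2 : ∑ i ∈ s, ‖(x : ℤ → ℂ) i‖ ^ p.toReal ≤ ‖x‖ ^ p.toReal :=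
      lp.sum_rpow_le_norm_rpow hp0 x s
    have := h1.le.trans h2
    by_contra hlt
    push_neg at hlt
    have := Real.rpow_lt_rpow (norm_nonneg x) hlt hp0
    linarith
lemma tendsto_finVec (hp : p ≠ ⊤) (x : SeqZ p) :
    Filter.Tendsto (fun s : Finset ℤ => finVec p s ⇑x) Filter.atTop (nhds x) :=
  lp.hasSum_single hp x

end Aux
section Core
open Finset in
lemma core_approx {p : ℝ≥0∞} [Fact (1 ≤ p)] {U V W : Set ℂ}
    (A B : SeqZ p →L[ℂ] SeqZ p) (hA : MemPE U V W A) (hB : MemM U V W B)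
    (x : SeqZ p) (s : Finset ℤ) (hxs : ∀ i ∉ s, (x : ℤ → ℂ) i = 0)
    {ε : ℝ} (hε : 0 < ε) :
    ∃ y : SeqZ p, ‖y‖ = ‖x‖ ∧ |‖A y‖ - ‖B x‖| ≤ ε := by
  obtain ⟨uA, vA, wA, hrA, hpeA, hactA⟩ := hA
  obtain ⟨uB, vB, wB, hrB, hactB⟩ := hB
  by_cases hx0 : x = 0
  · refine ⟨0, by rw [hx0], ?_⟩
    rw [hx0, map_zero, map_zero, norm_zero, sub_zero, abs_zero]
    exact hε.le
  have hsne : s.Nonempty := by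
    rcases Finset.eq_empty_or_nonempty s with rfl | h
    · exact absurd (lp.ext (funext fun i => hxs i (Finset.notMem_empty i))) hx0
    · exact h
  set m : ℤ := s.min' hsne with hm
  set M : ℤ := s.max' hsne with hM
  have hmM : m ≤ M := by
    obtain ⟨i0s, hi0s⟩ := hsne
    exact le_trans (s.min'_le i0s hi0s) (s.le_max' i0s hi0s)
  have hsupp : ∀ i : ℤ, (x : ℤ → ℂ) i ≠ 0 → m ≤ i ∧ i ≤ M := by
    intro i hi
    have his : i ∈ s := by
      by_contra h
      exact hi (hxs i h)
    exact ⟨s.min'_le i his, s.le_max' i his⟩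
  set n : ℕ := (M - m + 3).toNat with hndef
  have hn : (n : ℤ) = M - m + 3 := Int.toNat_of_nonneg (by linarith)
  have hnpos : 0 < n := by omega
  set R : ℝ := ‖x‖ with hRdef
  have hR0 : (0:ℝ) ≤ R := norm_nonneg x
  have hcoord : ∀ i : ℤ, ‖(x : ℤ → ℂ) i‖ ≤ R := fun i => lp.norm_apply_le_norm p_ne_zero x i
  set δ : ℝ := ε / (3 * n * (R + 1)) with hδdef
  have hnR : (0:ℝ) < 3 * n * (R + 1) := by positivity
  have hδ : 0 < δ := div_pos hε hnR
  obtain ⟨k, hk⟩ := hpeA n (fun j => uB (m - 1 + (j : ℕ))) (fun j => vB (m - 1 + (j : ℕ)))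
    (fun j => wB (m - 1 + (j : ℕ)))
    ⟨fun j => hrB.1 _, fun j => hrB.2.1 _, fun j => hrB.2.2 _⟩ δ hδ
  set t : ℤ := k - m + 1 with ht
  refine ⟨shl t x, norm_shl t x, ?_⟩
  set y : SeqZ p := shl t x with hy
  set z : SeqZ p := shl t (B x) with hz
  have hzn : ‖z‖ = ‖B x‖ := norm_shl t (B x)
  have hd : ∀ i : ℤ, ((A y - z : SeqZ p) : ℤ → ℂ) i =
      (uA i - uB (i - t)) * (x : ℤ → ℂ) (i - t - 1) +
      (vA i - vB (i - t)) * (x : ℤ → ℂ) (i - t) +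
      (wA i - wB (i - t)) * (x : ℤ → ℂ) (i - t + 1) := by
    intro i
    have e1 : i - 1 - t = i - t - 1 := by ring
    have e2 : i + 1 - t = i - t + 1 := by ring
    rw [lp.coeFn_sub, Pi.sub_apply, hactA y i]
    have hzi : (z : ℤ → ℂ) i = ((B x : SeqZ p) : ℤ → ℂ) (i - t) := rfl
    rw [hzi, hactB x (i - t)]
    have hy1 : (y : ℤ → ℂ) (i - 1) = (x : ℤ → ℂ) (i - t - 1) := by
      rw [hy, shl_apply, e1]
    have hy2 : (y : ℤ → ℂ) i = (x : ℤ → ℂ) (i - t) := rfl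
    have hy3 : (y : ℤ → ℂ) (i + 1) = (x : ℤ → ℂ) (i - t + 1) := by
      rw [hy, shl_apply, e2]
    rw [hy1, hy2, hy3]
    ring
  set window : Finset ℤ := Finset.Icc k (k + (M - m + 2)) with hw
  have hdz : ∀ i ∉ window, ((A y - z : SeqZ p) : ℤ → ℂ) i = 0 := by
    intro i hi
    rw [Finset.mem_Icc] at hi
    push_neg at hi
    have hx1 : (x : ℤ → ℂ) (i - t - 1) = 0 := by
      by_contra h
      obtain ⟨h1, h2⟩ := hsupp _ h
      omega
    have hx2 : (x : ℤ → ℂ) (i - t) = 0 := by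
      by_contra h
      obtain ⟨h1, h2⟩ := hsupp _ h
      omega
    have hx3 : (x : ℤ → ℂ) (i - t + 1) = 0 := by
      by_contra h
      obtain ⟨h1, h2⟩ := hsupp _ h
      omega
    rw [hd i, hx1, hx2, hx3]
    ring
  have hdb : ∀ i ∈ window, ‖((A y - z : SeqZ p) : ℤ → ℂ) i‖ ≤ 3 * (δ * R) := by
    intro i hi
    rw [Finset.mem_Icc] at hi
    set j : ℕ := (i - k).toNat with hjdef
    have hj : (j : ℤ) = i - k := Int.toNat_of_nonneg (by omega)
    have hjn : j < n := by omega
    have hkk := hk ⟨j, hjn⟩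
    have hcu : ‖uA (k + (j : ℕ)) - uB (m - 1 + (j : ℕ))‖ < δ := hkk.1
    have hcv : ‖vA (k + (j : ℕ)) - vB (m - 1 + (j : ℕ))‖ < δ := hkk.2.1
    have hcw : ‖wA (k + (j : ℕ)) - wB (m - 1 + (j : ℕ))‖ < δ := hkk.2.2
    have hki : k + (j : ℕ) = i := by omega
    have hmi : m - 1 + (j : ℕ) = i - t := by omega
    rw [hki, hmi] at hcu hcv hcw
    rw [hd i]
    have hterm : ∀ (a : ℂ) ( hc : ‖a‖ < δ) (b : ℂ) (hb : ‖b‖ ≤ R), ‖a * b‖ ≤ δ * R := by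
      intro a ha b hb
      rw [norm_mul]
      exact mul_le_mul ha.le hb (norm_nonneg b) hδ.le
    calc ‖_ + _ + _‖ ≤ ‖(uA i - uB (i - t)) * (x : ℤ → ℂ) (i - t - 1)‖ +
          ‖(vA i - vB (i - t)) * (x : ℤ → ℂ) (i - t)‖ +
          ‖(wA i - wB (i - t)) * (x : ℤ → ℂ) (i - t + 1)‖ := norm_add₃_le
      _ ≤ δ * R + δ * R + δ * R := by
          gcongr <;> [exact hterm _ hcu _ (hcoord _); exact hterm _ hcv _ (hcoord _);
            exact hterm _ hcw _ (hcoord _)]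
      _ = 3 * (δ * R) := by ring
  have hcard : (window.card : ℝ) = n := by
    rw [hw, Int.card_Icc]
    have : (k + (M - m + 2) + 1 - k) = M - m + 3 := by ring
    rw [this, ← hndef]
  have hnorm : ‖A y - z‖ ≤ ε := by
    calc ‖A y - z‖ ≤ ∑ i ∈ window, ‖((A y - z : SeqZ p) : ℤ → ℂ) i‖ :=
          norm_le_sum_of_support _ window hdz
      _ ≤ ∑ _i ∈ window, 3 * (δ * R) := Finset.sum_le_sum hdb
      _ = (n : ℝ) * (3 * (δ * R)) := by rw [Finset.sum_const, nsmul_eq_mul, hcard]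
      _ = ε * (3 * n * R / (3 * n * (R + 1))) := by
          rw [hδdef]; field_simp
      _ ≤ ε * 1 := by
          refine mul_le_mul_of_nonneg_left ?_ hε.le
          rw [div_le_one hnR]
          nlinarith
      _ = ε := mul_one ε
  calc |‖A y‖ - ‖B x‖| = |‖A y‖ - ‖z‖| := by rw [hzn]
    _ ≤ ‖A y - z‖ := abs_norm_sub_norm_le _ _
    _ ≤ ε := hnorm
end Core
section Asm

open Filter Topology

lemma le_add_eps {a b : ℝ} (h : ∀ ε : ℝ, 0 < ε → a ≤ b + ε) : a ≤ b := by
  by_contra hlt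
  push_neg at hlt
  have := h ((a - b) / 2) (by linarith)
  linarith

lemma claim1 {p : ℝ≥0∞} [Fact (1 ≤ p)] {U V W : Set ℂ}
    (A B : SeqZ p →L[ℂ] SeqZ p) (hA : MemPE U V W A) (hB : MemM U V W B) :
    ‖B‖ ≤ ‖A‖ := by
  have hfin : ∀ (x : SeqZ p) (s : Finset ℤ), (∀ i ∉ s, (x : ℤ → ℂ) i = 0) →
      ‖B x‖ ≤ ‖A‖ * ‖x‖ := by
    intro x s hxs
    refine le_add_eps fun ε hε => ?_
    obtain ⟨y, hy, hay⟩ := core_approx A B hA hB x s hxs hε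
    have h1 := (abs_le.mp hay).1
    have h2 : ‖A y‖ ≤ ‖A‖ * ‖y‖ := A.le_opNorm y
    rw [hy] at h2
    linarith
  refine ContinuousLinearMap.opNorm_le_bound B (norm_nonneg A) fun x => ?_
  rcases eq_or_ne p ∞ with rfl | hptop
  · refine lp.norm_le_of_forall_le (mul_nonneg (norm_nonneg A) (norm_nonneg x)) fun i => ?_
    obtain ⟨uB, vB, wB, hrB, hactB⟩ := hB
    set s3 : Finset ℤ := Finset.Icc (i - 1) (i + 1) with hs3def
    set w3 : SeqZ ⊤ := finVec ⊤ s3 ⇑x with hw3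
    have hs3 : ∀ j ∉ s3, (w3 : ℤ → ℂ) j = 0 := fun j hj => by
      rw [hw3, finVec_apply, if_neg hj]
    have e1 : (w3 : ℤ → ℂ) (i - 1) = (x : ℤ → ℂ) (i - 1) := by
      rw [hw3, finVec_apply, if_pos (by rw [hs3def, Finset.mem_Icc]; omega)]
    have e2 : (w3 : ℤ → ℂ) i = (x : ℤ → ℂ) i := by
      rw [hw3, finVec_apply, if_pos (by rw [hs3def, Finset.mem_Icc]; omega)]
    have e3 : (w3 : ℤ → ℂ) (i + 1) = (x : ℤ → ℂ) (i + 1) := by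
      rw [hw3, finVec_apply, if_pos (by rw [hs3def, Finset.mem_Icc]; omega)]
    have hcoeq : ((B x : SeqZ ⊤) : ℤ → ℂ) i = ((B w3 : SeqZ ⊤) : ℤ → ℂ) i := by
      rw [hactB x i, hactB w3 i, e1, e2, e3]
    rw [hcoeq]
    calc ‖((B w3 : SeqZ ⊤) : ℤ → ℂ) i‖ ≤ ‖B w3‖ :=
          lp.norm_apply_le_norm ENNReal.top_ne_zero (B w3) i
      _ ≤ ‖A‖ * ‖w3‖ := hfin w3 s3 hs3
      _ ≤ ‖A‖ * ‖x‖ :=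
          mul_le_mul_of_nonneg_left (norm_finVec_coe_le s3 x) (norm_nonneg A)
  · have htd := tendsto_finVec hptop x
    have h1 : Tendsto (fun s : Finset ℤ => ‖B (finVec p s ⇑x)‖) atTop (𝓝 ‖B x‖) :=
      ((B.continuous.tendsto x).comp htd).norm
    refine le_of_tendsto h1 (Filter.Eventually.of_forall fun s => ?_)
    calc ‖B (finVec p s ⇑x)‖ ≤ ‖A‖ * ‖finVec p s ⇑x‖ :=
          hfin _ s (fun i hi => by rw [finVec_apply, if_neg hi])
      _ ≤ ‖A‖ * ‖x‖ := mul_le_mul_of_nonneg_left (norm_finVec_coe_le s x) (norm_nonneg A)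

set_option maxHeartbeats 1000000 in
lemma claim2 {p : ℝ≥0∞} [Fact (1 ≤ p)] {U V W : Set ℂ}
    (hUne : U.Nonempty) (hUc : IsCompact U) (hWne : W.Nonempty) (hWc : IsCompact W)
    (A B : SeqZ p →L[ℂ] SeqZ p) (hA : MemPE U V W A) (hB : MemM U V W B)
    (hiA : IsUnit A) (hiB : IsUnit B) :
    ‖Ring.inverse B‖ ≤ ‖Ring.inverse A‖ := by
  set iA : SeqZ p →L[ℂ] SeqZ p := Ring.inverse A with hiAdef
  have hAy : ∀ y : SeqZ p, iA (A y) = y := by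
    intro y
    have h : iA * A = 1 := Ring.inverse_mul_cancel A hiA
    rw [← ContinuousLinearMap.mul_apply, h, ContinuousLinearMap.one_apply]
  -- finitely supported vectors
  have hfin : ∀ (x : SeqZ p) (s : Finset ℤ), (∀ i ∉ s, (x : ℤ → ℂ) i = 0) →
      ‖x‖ ≤ ‖iA‖ * ‖B x‖ := by
    intro x s hxs
    refine le_add_eps fun ε hε => ?_
    have hε' : 0 < ε / (‖iA‖ + 1) := by positivity
    obtain ⟨y, hy, hay⟩ := core_approx A B hA hB x s hxs hε'
    have h1 := (abs_le.mp hay).2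
    have h2 : ‖y‖ ≤ ‖iA‖ * ‖A y‖ := by
      calc ‖y‖ = ‖iA (A y)‖ := by rw [hAy y]
        _ ≤ ‖iA‖ * ‖A y‖ := iA.le_opNorm (A y)
    have h3 : ‖iA‖ * (ε / (‖iA‖ + 1)) ≤ ε := by
      rw [mul_div_assoc', div_le_iff₀ (by positivity : (0:ℝ) < ‖iA‖ + 1)]
      nlinarith [norm_nonneg iA, hε.le]
    have h4 : ‖iA‖ * ‖A y‖ ≤ ‖iA‖ * (‖B x‖ + ε / (‖iA‖ + 1)) :=
      mul_le_mul_of_nonneg_left (by linarith) (norm_nonneg iA)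
    calc ‖x‖ = ‖y‖ := hy.symm
      _ ≤ ‖iA‖ * ‖A y‖ := h2
      _ ≤ ‖iA‖ * ‖B x‖ + ‖iA‖ * (ε / (‖iA‖ + 1)) := by rw [mul_add] at h4; linarith
      _ ≤ ‖iA‖ * ‖B x‖ + ε := by linarith
  -- all vectors
  have hgen : ∀ x : SeqZ p, ‖x‖ ≤ ‖iA‖ * ‖B x‖ := by
    intro x
    rcases eq_or_ne p ∞ with rfl | hptop
    · -- p = ∞ : plateau cutoff argument
      obtain ⟨uB, vB, wB, hrB, hactB⟩ := hB
      obtain ⟨cu, hcuU, hcu⟩ := hUc.exists_isMaxOn hUne continuous_norm.continuousOn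
      obtain ⟨cw, hcwW, hcw⟩ := hWc.exists_isMaxOn hWne continuous_norm.continuousOn
      set Cu : ℝ := ‖cu‖ with hCudef
      set Cw : ℝ := ‖cw‖ with hCwdef
      have hCu : ∀ c ∈ U, ‖c‖ ≤ Cu := fun c hc => hcu hc
      have hCw : ∀ c ∈ W, ‖c‖ ≤ Cw := fun c hc => hcw hc
      have hCu0 : 0 ≤ Cu := norm_nonneg cu
      have hCw0 : 0 ≤ Cw := norm_nonneg cw
      set C : ℝ := Cu + Cw + 1 with hCdef
      have hC0 : 0 < C := by positivity
      set N : ℝ := ‖x‖ with hNdef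
      have hN0 : 0 ≤ N := norm_nonneg x
      refine le_add_eps fun ε hε => ?_
      -- choose L
      obtain ⟨L, hL1, hLbig⟩ : ∃ L : ℕ, 1 ≤ L ∧ ‖iA‖ * C * N / (L : ℝ) ≤ ε / 2 := by
        refine ⟨⌈(‖iA‖ * C * N) / (ε / 2)⌉₊ + 1, Nat.le_add_left 1 _, ?_⟩
        have hLpos' : (0:ℝ) < (((⌈(‖iA‖ * C * N) / (ε / 2)⌉₊ + 1 : ℕ)) : ℝ) := by positivity
        rw [div_le_iff₀ hLpos']
        have h2 : (‖iA‖ * C * N) / (ε / 2) ≤ ((⌈(‖iA‖ * C * N) / (ε / 2)⌉₊ + 1 : ℕ) : ℝ) := by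
          refine le_trans (Nat.le_ceil _) ?_
          exact_mod_cast Nat.le_succ _
        have h4 := (div_le_iff₀ (by linarith : (0:ℝ) < ε / 2)).mp h2
        linarith
      have hLpos : (0:ℝ) < L := by exact_mod_cast hL1
      -- pick near-maximal coordinate
      obtain ⟨i0, hi0⟩ : ∃ i0 : ℤ, N - ε / 2 < ‖(x : ℤ → ℂ) i0‖ := by
        by_contra h
        push_neg at h
        have : N ≤ N - ε / 2 := by
          rw [hNdef, lp.norm_eq_ciSup]
          exact ciSup_le h
        linarith
      -- the cutoff function
      set φ : ℤ → ℝ := fun j => max 0 (min 1 (2 - |(j : ℝ) - (i0 : ℝ)| / L)) with hφdef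
      have hφ0 : ∀ j, 0 ≤ φ j := fun j => le_max_left _ _
      have hφ1 : ∀ j, φ j ≤ 1 := fun j => max_le zero_le_one (min_le_left _ _)
      have hφi0 : φ i0 = 1 := by
        rw [hφdef]
        simp only [sub_self, abs_zero, zero_div, sub_zero]
        rw [min_eq_left (by norm_num), max_eq_right zero_le_one]
      set s' : Finset ℤ := Finset.Icc (i0 - 2 * L) (i0 + 2 * L) with hs'def
      have hφsupp : ∀ j ∉ s', φ j = 0 := by
        intro j hj
        rw [hs'def, Finset.mem_Icc] at hj
        push_neg at hj
        have habs : 2 * (L : ℝ) ≤ |(j : ℝ) - (i0 : ℝ)| := by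
          rcases le_or_gt (i0 - 2 * L) j with h1 | h2
          · have := hj h1
            rw [le_abs]
            left
            push_cast
            have : (i0 : ℝ) + 2 * L < j := by exact_mod_cast this
            linarith
          · rw [le_abs]
            right
            push_cast
            have : (j : ℝ) < i0 - 2 * L := by exact_mod_cast h2
            linarith
        have hdiv : (2:ℝ) ≤ |(j : ℝ) - (i0 : ℝ)| / L := by
          rw [le_div_iff₀ hLpos]
          linarith
        rw [hφdef]
        have : min 1 (2 - |(j : ℝ) - (i0 : ℝ)| / L) ≤ 0 :=
          le_trans (min_le_right _ _) (by linarith)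
        exact max_eq_left this
      have hφlip : ∀ j j' : ℤ, |φ j - φ j'| ≤ |(j : ℝ) - (j' : ℝ)| / L := by
        intro j j'
        set a : ℝ := 2 - |(j : ℝ) - (i0 : ℝ)| / L with ha
        set b : ℝ := 2 - |(j' : ℝ) - (i0 : ℝ)| / L with hb
        have h1 : |φ j - φ j'| ≤ |min 1 a - min 1 b| := by
          rw [hφdef]
          simp only []
          rw [max_comm 0 (min 1 a), max_comm 0 (min 1 b)]
          exact abs_max_sub_max_le_abs _ _ _
        have h2 : |min 1 a - min 1 b| ≤ |a - b| := by
          have := abs_min_sub_min_le_max (1:ℝ) a 1 b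
          simpa using this
        have h3 : |a - b| ≤ |(j : ℝ) - (j' : ℝ)| / L := by
          rw [ha, hb]
          have : (2 - |(j : ℝ) - (i0 : ℝ)| / L) - (2 - |(j' : ℝ) - (i0 : ℝ)| / L)
              = (|(j' : ℝ) - (i0 : ℝ)| - |(j : ℝ) - (i0 : ℝ)|) / L := by ring
          rw [this, abs_div, abs_of_pos hLpos, div_le_div_iff_of_pos_right hLpos]
          calc |(|(j' : ℝ) - (i0 : ℝ)| - |(j : ℝ) - (i0 : ℝ)|)|
              ≤ |((j' : ℝ) - (i0 : ℝ)) - ((j : ℝ) - (i0 : ℝ))| := abs_abs_sub_abs_le_abs_sub _ _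
            _ = |(j : ℝ) - (j' : ℝ)| := by rw [← abs_neg]; ring_nf
        linarith
      -- the truncated vector
      set x' : SeqZ ⊤ := finVec ⊤ s' (fun j => (φ j : ℂ) * (x : ℤ → ℂ) j) with hx'def
      have hx'c : ∀ j, (x' : ℤ → ℂ) j = (φ j : ℂ) * (x : ℤ → ℂ) j := by
        intro j
        rw [hx'def, finVec_apply]
        split
        · rfl
        · rw [hφsupp j ‹_›]; simp
      have hx's : ∀ j ∉ s', (x' : ℤ → ℂ) j = 0 := fun j hj => by
        rw [hx'def, finVec_apply, if_neg hj]
      have hlow : N - ε / 2 < ‖x'‖ := by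
        calc N - ε / 2 < ‖(x : ℤ → ℂ) i0‖ := hi0
          _ = ‖(x' : ℤ → ℂ) i0‖ := by rw [hx'c i0, hφi0]; simp
          _ ≤ ‖x'‖ := lp.norm_apply_le_norm ENNReal.top_ne_zero x' i0
      -- bound on B x'
      have hxN : ∀ j, ‖(x : ℤ → ℂ) j‖ ≤ N :=
        fun j => lp.norm_apply_le_norm ENNReal.top_ne_zero x j
      have hBxN : ∀ j, ‖((B x : SeqZ ⊤) : ℤ → ℂ) j‖ ≤ ‖B x‖ :=
        fun j => lp.norm_apply_le_norm ENNReal.top_ne_zero (B x) j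
      have hφstep : ∀ j j' : ℤ, |(j' : ℝ) - (j : ℝ)| ≤ 1 → |φ j' - φ j| ≤ 1 / L := by
        intro j j' h
        refine le_trans (hφlip j' j) ?_
        gcongr
      have hBx' : ‖B x'‖ ≤ ‖B x‖ + C * N / L := by
        refine lp.norm_le_of_forall_le
          (by positivity) fun j => ?_
        have hkey : ((B x' : SeqZ ⊤) : ℤ → ℂ) j =
            (φ j : ℂ) * ((B x : SeqZ ⊤) : ℤ → ℂ) j +
            uB j * ((φ (j - 1) - φ j : ℝ) : ℂ) * (x : ℤ → ℂ) (j - 1) +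
            wB j * ((φ (j + 1) - φ j : ℝ) : ℂ) * (x : ℤ → ℂ) (j + 1) := by
          rw [hactB x' j, hx'c (j - 1), hx'c j, hx'c (j + 1), hactB x j]
          push_cast
          ring
        rw [hkey]
        have t1 : ‖(φ j : ℂ) * ((B x : SeqZ ⊤) : ℤ → ℂ) j‖ ≤ ‖B x‖ := by
          rw [norm_mul, Complex.norm_real, Real.norm_eq_abs, abs_of_nonneg (hφ0 j)]
          calc φ j * ‖((B x : SeqZ ⊤) : ℤ → ℂ) j‖ ≤ 1 * ‖B x‖ :=
            mul_le_mul (hφ1 j) (hBxN j) (norm_nonneg _) zero_le_one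
          _ = ‖B x‖ := one_mul _
        have t2 : ‖uB j * ((φ (j - 1) - φ j : ℝ) : ℂ) * (x : ℤ → ℂ) (j - 1)‖
            ≤ Cu * (1 / L) * N := by
          rw [norm_mul, norm_mul, Complex.norm_real, Real.norm_eq_abs]
          refine mul_le_mul (mul_le_mul (hCu _ (hrB.1 j)) ((hφstep j (j-1) (by
              push_cast
              rw [show ((j:ℝ) - 1 - (j:ℝ)) = -1 by ring]
              norm_num)))
            (abs_nonneg _) hCu0) (hxN _) (norm_nonneg _) (by positivity)
        have t3 : ‖wB j * ((φ (j + 1) - φ j : ℝ) : ℂ) * (x : ℤ → ℂ) (j + 1)‖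
            ≤ Cw * (1 / L) * N := by
          rw [norm_mul, norm_mul, Complex.norm_real, Real.norm_eq_abs]
          refine mul_le_mul (mul_le_mul (hCw _ (hrB.2.2 j)) ((hφstep j (j+1) (by
              push_cast
              rw [show ((j:ℝ) + 1 - (j:ℝ)) = 1 by ring]
              norm_num)))
            (abs_nonneg _) hCw0) (hxN _) (norm_nonneg _) (by positivity)
        calc ‖_ + _ + _‖ ≤ ‖(φ j : ℂ) * ((B x : SeqZ ⊤) : ℤ → ℂ) j‖ +
              ‖uB j * ((φ (j - 1) - φ j : ℝ) : ℂ) * (x : ℤ → ℂ) (j - 1)‖ +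
              ‖wB j * ((φ (j + 1) - φ j : ℝ) : ℂ) * (x : ℤ → ℂ) (j + 1)‖ := norm_add₃_le
          _ ≤ ‖B x‖ + Cu * (1 / L) * N + Cw * (1 / L) * N := by linarith
          _ ≤ ‖B x‖ + C * N / L := by
              rw [hCdef]
              have h1 : Cu * (1 / L) * N + Cw * (1 / L) * N = (Cu + Cw) * N / L := by ring
              have hNL : (0:ℝ) ≤ N / L := by positivity
              have h2 : (Cu + Cw) * N / L ≤ (Cu + Cw + 1) * N / L := by
                have e1 : (Cu + Cw) * N / L = (Cu + Cw) * (N / L) := by ring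
                have e2 : (Cu + Cw + 1) * N / L = (Cu + Cw + 1) * (N / L) := by ring
                rw [e1, e2]
                nlinarith [hNL]
              linarith
      have hfx' : ‖x'‖ ≤ ‖iA‖ * ‖B x'‖ := hfin x' s' hx's
      have hmono : ‖iA‖ * ‖B x'‖ ≤ ‖iA‖ * (‖B x‖ + C * N / L) :=
        mul_le_mul_of_nonneg_left hBx' (norm_nonneg iA)
      have hfinal : ‖iA‖ * (C * N / L) ≤ ε / 2 := by
        calc ‖iA‖ * (C * N / L) = ‖iA‖ * C * N / L := by ring
          _ ≤ ε / 2 := hLbig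
      calc N ≤ ‖x'‖ + ε / 2 := by linarith
        _ ≤ ‖iA‖ * ‖B x'‖ + ε / 2 := by linarith
        _ ≤ ‖iA‖ * (‖B x‖ + C * N / L) + ε / 2 := by linarith
        _ = ‖iA‖ * ‖B x‖ + ‖iA‖ * (C * N / L) + ε / 2 := by ring
        _ ≤ ‖iA‖ * ‖B x‖ + ε / 2 + ε / 2 := by linarith
        _ = ‖iA‖ * ‖B x‖ + ε := by ring
    · -- p ≠ ∞ : density of finitely supported vectors
      have htd := tendsto_finVec hptop x
      have h1 : Tendsto (fun s : Finset ℤ => ‖finVec p s ⇑x‖) atTop (𝓝 ‖x‖) := htd.norm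
      have h2 : Tendsto (fun s : Finset ℤ => ‖iA‖ * ‖B (finVec p s ⇑x)‖) atTop
          (𝓝 (‖iA‖ * ‖B x‖)) :=
        (((B.continuous.tendsto x).comp htd).norm).const_mul ‖iA‖
      exact le_of_tendsto_of_tendsto' h1 h2 fun s =>
        hfin _ s (fun i hi => by rw [finVec_apply, if_neg hi])
  refine ContinuousLinearMap.opNorm_le_bound _ (norm_nonneg iA) fun yv => ?_
  have hByv : B (Ring.inverse B yv) = yv := by
    have h : B * Ring.inverse B = 1 := Ring.mul_inverse_cancel B hiB
    rw [← ContinuousLinearMap.mul_apply, h, ContinuousLinearMap.one_apply]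
  calc ‖Ring.inverse B yv‖ ≤ ‖iA‖ * ‖B (Ring.inverse B yv)‖ := hgen _
    _ = ‖iA‖ * ‖yv‖ := by rw [hByv]

end Asm
/-- For `A ∈ PE(U,V,W)` and any `B ∈ M(U,V,W)`: `‖A‖_p ≥ ‖B‖_p`, and if
`(U,V,W)` is compatible then `A`, `B` are invertible with `‖A⁻¹‖_p ≥ ‖B⁻¹‖_p`. -/
theorem statement7 (U V W : Set ℂ)
    (hUne : U.Nonempty) (hUc : IsCompact U) (hVne : V.Nonempty) (hVc : IsCompact V)
    (hWne : W.Nonempty) (hWc : IsCompact W)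
    (p : ℝ≥0∞) [Fact (1 ≤ p)]
    (A B : SeqZ p →L[ℂ] SeqZ p) (hA : MemPE U V W A) (hB : MemM U V W B) :
    ‖B‖ ≤ ‖A‖ ∧
    (Compatible U V W →
      IsUnit A ∧ IsUnit B ∧ ‖Ring.inverse B‖ ≤ ‖Ring.inverse A‖) := by
  have hAM : MemM U V W A := by
    obtain ⟨u, v, w, hr, hpe, hact⟩ := hA
    exact ⟨u, v, w, hr, hact⟩
  refine ⟨claim1 A B hA hB, fun hc => ?_⟩
  have hiA := hc p A hAM
  have hiB := hc p B hB
  exact ⟨hiA, hiB, claim2 hUne hUc hWne hWc A B hA hB hiA hiB⟩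
end
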